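/- arXiv:1008.3242 — 4 statements merged into one kernel-verified Lean document; each statement's English description precedes it below -/
import Mathlib

section
/- For every integer d ≥ 2 there exist edge-coloured graphs G with minimum colour degree δ^c(G) = d in which every properly coloured path has length at most 2d and every properly coloured cycle has length at most d. (Such a graph is obtained by taking p ≥ d pairwise vertex-disjoint rainbow copies H_1, …, H_p of the complete graph K_d, adding a new vertex x, and joining x to every vertex of H_j by an edge of a new colour c_j, for each j.) -/
open SimpleGraph

open SimpleGraph

/-- A walk is properly coloured if consecutive edges receive distinct colours. -/
def IsProperWalk {V C : Type*} {G : SimpleGraph V} (c : Sym2 V → C) {u v : V}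
    (w : G.Walk u v) : Prop :=
  List.Chain' (· ≠ ·) (w.edges.map c)

/-- A closed walk is properly coloured as a cycle if consecutive edges, including the
wrap-around pair of last and first edge, receive distinct colours. -/
def IsProperCycleWalk {V C : Type*} {G : SimpleGraph V} (c : Sym2 V → C) {u : V}
    (w : G.Walk u u) : Prop :=
  List.Chain' (· ≠ ·) (w.edges.map c ++ (w.edges.map c).take 1)

/-- The colour degree of a vertex: the number of distinct colours on incident edges. -/
noncomputable def colorDegree {V C : Type*} (G : SimpleGraph V) (c : Sym2 V → C) (v : V) : ℕ :=
  {col : C | ∃ w, G.Adj v w ∧ c s(v, w) = col}.ncard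

/-- The minimum colour degree of an edge-coloured graph. -/
noncomputable def minColorDegree {V C : Type*} (G : SimpleGraph V) (c : Sym2 V → C) : ℕ :=
  sInf (Set.range (colorDegree G c))

section Construction

variable (d : ℕ)

/-- The apex vertex. -/
def apexV : Fin (d*d+1) := ⟨d*d, Nat.lt_succ_self _⟩

/-- The copy index of a vertex. -/
def cop (v : Fin (d*d+1)) : ℕ := v.val / d

/-- The graph: d disjoint copies of K_d plus an apex joined to everything. -/
def Gd : SimpleGraph (Fin (d*d+1)) where
  Adj a b := a ≠ b ∧ (a = apexV d ∨ b = apexV d ∨ cop d a = cop d b)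
  symm := by
    constructor
    rintro a b ⟨h1, h2⟩
    exact ⟨h1.symm, by tauto⟩
  loopless := by constructor; rintro a ⟨h1, _⟩; exact h1 rfl

lemma Gd_adj {a b : Fin (d*d+1)} :
    (Gd d).Adj a b ↔ a ≠ b ∧ (a = apexV d ∨ b = apexV d ∨ cop d a = cop d b) := Iff.rfl

/-- The colouring. -/
def colf : Sym2 (Fin (d*d+1)) → ℕ :=
  Sym2.lift ⟨fun a b =>
    if a = apexV d then cop d b else if b = apexV d then cop d a
      else d + (a.val % d + b.val % d), by
    intro a b
    by_cases ha : a = apexV d <;> by_cases hb : b = apexV d <;>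
      simp [ha, hb] <;> omega⟩

lemma colf_apex (v : Fin (d*d+1)) : colf d s(apexV d, v) = cop d v := by
  simp [colf]

lemma colf_apex' (v : Fin (d*d+1)) : colf d s(v, apexV d) = cop d v := by
  by_cases hv : v = apexV d
  · subst hv; simp [colf]
  · simp [colf, hv]

lemma colf_same {a b : Fin (d*d+1)} (ha : a ≠ apexV d) (hb : b ≠ apexV d) :
    colf d s(a, b) = d + (a.val % d + b.val % d) := by
  simp [colf, ha, hb]

lemma val_lt {v : Fin (d*d+1)} (hv : v ≠ apexV d) : v.val < d*d := by
  have h1 := v.isLt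
  have h2 : v.val ≠ d*d := fun h => hv (Fin.ext h)
  omega

lemma cop_lt (hd : 1 ≤ d) {v : Fin (d*d+1)} (hv : v ≠ apexV d) : cop d v < d :=
  Nat.div_lt_of_lt_mul (by simpa [mul_comm] using val_lt d hv)

end Construction

section Walks

variable (d : ℕ)

/-- All vertices of an apex-free walk lie in the same copy. -/
lemma cop_const {a b : Fin (d*d+1)} (p : (Gd d).Walk a b)
    (hp : apexV d ∉ p.support) : ∀ v ∈ p.support, cop d v = cop d a := by
  induction p with
  | nil => simp
  | @cons u x b h q ih =>
    simp only [Walk.support_cons, List.mem_cons, not_or] at hp ⊢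
    obtain ⟨ha, hq⟩ := hp
    have hx : x ∈ q.support := q.start_mem_support
    have hxa : x ≠ apexV d := fun h' => hq (h' ▸ hx)
    have hcx : cop d x = cop d u := by
      rcases h.2 with h1 | h1 | h1
      · exact absurd h1.symm ha
      · exact absurd h1 hxa
      · exact h1.symm
    intro v hv
    rcases hv with rfl | hv
    · rfl
    · rw [ih hq v hv, hcx]

/-- The copy with index `j`, as a finset. -/
def copyF (j : ℕ) : Finset (Fin (d*d+1)) :=
  Finset.univ.filter (fun v => v ≠ apexV d ∧ cop d v = j)

lemma card_copyF_le (hd : 1 ≤ d) (j : ℕ) : (copyF d j).card ≤ d := by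
  have : (copyF d j).card ≤ (Finset.range d).card := by
    apply Finset.card_le_card_of_injOn (fun v => v.val % d)
    · intro v hv
      simp only [Finset.mem_range, Finset.mem_coe]
      exact Nat.mod_lt _ hd
    · intro v1 h1 v2 h2 hmod
      simp only [copyF, Finset.mem_coe, Finset.mem_filter, Finset.mem_univ, true_and] at h1 h2
      simp only at hmod
      apply Fin.ext
      have e1 : d * cop d v1 + v1.val % d = v1.val := Nat.div_add_mod _ _
      have e2 : d * cop d v2 + v2.val % d = v2.val := Nat.div_add_mod _ _
      rw [← e1, ← e2, h1.2, h2.2, hmod]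
  simpa using this

lemma length_le_of_subset_copy (hd : 1 ≤ d) {j : ℕ} {l : List (Fin (d*d+1))}
    (hn : l.Nodup) (hl : ∀ v ∈ l, v ∈ copyF d j) : l.length ≤ d := by
  have h1 : l.toFinset.card = l.length := List.toFinset_card_of_nodup hn
  have h2 : l.toFinset ⊆ copyF d j := fun v hv => hl v (List.mem_toFinset.mp hv)
  calc l.length = l.toFinset.card := h1.symm
    _ ≤ (copyF d j).card := Finset.card_le_card h2
    _ ≤ d := card_copyF_le d hd j

/-- A nodup-support walk starting at the apex has length at most d. -/
lemma length_from_apex (hd : 1 ≤ d) {a : Fin (d*d+1)}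
    (r : (Gd d).Walk (apexV d) a) (hr : r.support.Nodup) : r.length ≤ d := by
  cases r with
  | nil => simpa using hd
  | @cons u x a h p =>
    rw [Walk.support_cons, List.nodup_cons] at hr
    obtain ⟨hap, hnd⟩ := hr
    have hmem : ∀ v ∈ p.support, v ∈ copyF d (cop d x) := by
      intro v hv
      simp only [copyF, Finset.mem_filter, Finset.mem_univ, true_and]
      exact ⟨fun h' => hap (h' ▸ hv), cop_const d p hap v hv⟩
    have := length_le_of_subset_copy d hd hnd hmem
    rw [Walk.length_support] at this
    simpa using this

lemma length_to_apex (hd : 1 ≤ d) {a : Fin (d*d+1)}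
    (q : (Gd d).Walk a (apexV d)) (hq : q.support.Nodup) : q.length ≤ d := by
  have := length_from_apex d hd q.reverse
    (by rwa [Walk.support_reverse, List.nodup_reverse])
  rwa [Walk.length_reverse] at this

/-- Every path in `Gd d` has length at most `2d`. -/
lemma path_bound (hd : 1 ≤ d) {x y : Fin (d*d+1)}
    (w : (Gd d).Walk x y) (hw : w.IsPath) : w.length ≤ 2 * d := by
  by_cases h : apexV d ∈ w.support
  · have h1 := length_to_apex d hd (w.takeUntil _ h) (hw.takeUntil h).support_nodup
    have h2 := length_from_apex d hd (w.dropUntil _ h) (hw.dropUntil h).support_nodup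
    have h3 : (w.takeUntil _ h).length + (w.dropUntil _ h).length = w.length := by
      rw [← Walk.length_append, Walk.take_spec]
    omega
  · have hmem : ∀ v ∈ w.support, v ∈ copyF d (cop d x) := by
      intro v hv
      simp only [copyF, Finset.mem_filter, Finset.mem_univ, true_and]
      exact ⟨fun h' => h (h' ▸ hv), cop_const d w h v hv⟩
    have := length_le_of_subset_copy d hd hw.support_nodup hmem
    rw [Walk.length_support] at this
    omega

end Walks

section ChainRotate

variable {α : Type*} {R : α → α → Prop}

lemma chain'_wrap_rotate_one (l : List α)
    (h : List.Chain' R (l ++ l.take 1)) :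
    List.Chain' R (l.rotate 1 ++ (l.rotate 1).take 1) := by
  match l with
  | [] => simpa using h
  | [a] => simpa using h
  | a :: b :: t =>
    have hrot : (a :: b :: t).rotate 1 = (b :: t) ++ [a] := by
      rw [List.rotate_cons_succ, List.rotate_zero]
    rw [hrot]
    simp only [List.cons_append, List.take_succ_cons, List.take_zero] at h ⊢
    unfold List.Chain' at h ⊢
    rw [List.isChain_cons] at h
    obtain ⟨hab, h2⟩ := h
    have hab' : R a b := hab b rfl
    have e1 : (b :: (t ++ [a] ++ [b]) : List α) = (b :: (t ++ [a])) ++ [b] := by simp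
    rw [e1]
    apply List.IsChain.append h2 (List.isChain_singleton b)
    intro x hx y hy
    have e2 : (b :: (t ++ [a]) : List α) = (b :: t) ++ [a] := by simp
    rw [e2, List.getLast?_concat] at hx
    simp only [List.head?_cons, Option.mem_def, Option.some.injEq] at hx hy
    rw [← hx, ← hy]
    exact hab'

lemma chain'_wrap_rotate (l : List α) (n : ℕ)
    (h : List.Chain' R (l ++ l.take 1)) :
    List.Chain' R (l.rotate n ++ (l.rotate n).take 1) := by
  induction n with
  | zero => simpa using h
  | succ k ih =>
    rw [show k + 1 = k + 1 from rfl, ← List.rotate_rotate]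
    exact chain'_wrap_rotate_one _ ih

end ChainRotate

section Cycles

variable (d : ℕ)

/-- The last edge of a walk into the apex whose earlier support avoids the apex. -/
lemma last_edge_aux {v b : Fin (d*d+1)} (p : (Gd d).Walk v b) (hb : b = apexV d)
    (hnp : ¬ p.Nil) (hsup : apexV d ∉ p.support.dropLast) :
    ∃ u, u ≠ apexV d ∧ cop d u = cop d v ∧ p.edges.getLast? = some s(u, apexV d) := by
  induction p with
  | nil => exact absurd Walk.Nil.nil hnp
  | @cons u x c h q ih =>
    rw [Walk.support_cons, List.dropLast_cons_of_ne_nil q.support_ne_nil,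
      List.mem_cons, not_or] at hsup
    obtain ⟨hu, hq⟩ := hsup
    by_cases hx : q.Nil
    · have hxc : x = c := hx.eq
      have hqe : q.edges = [] := by
        have := q.length_edges
        rw [Walk.nil_iff_length_eq.mp hx] at this
        exact List.length_eq_zero_iff.mp this
      subst hb
      refine ⟨u, Ne.symm hu, rfl, ?_⟩
      rw [Walk.edges_cons, hqe]
      simp [hxc]
    · have hsupq : q.support.length ≥ 2 := by
        rw [Walk.length_support]
        have := Walk.not_nil_iff_lt_length.mp hx
        omega
      have htail : q.support.tail ≠ [] := by
        intro h'
        rw [Walk.support_eq_cons, h'] at hsupq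
        simp at hsupq
      have hxmem : x ∈ q.support.dropLast := by
        rw [Walk.support_eq_cons, List.dropLast_cons_of_ne_nil htail]
        exact List.mem_cons_self
      have hxa : x ≠ apexV d := fun h' => hq (h' ▸ hxmem)
      obtain ⟨w, hw, hcw, hlast⟩ := ih hb hx hq
      refine ⟨w, hw, ?_, ?_⟩
      · rw [hcw]
        rcases h.2 with h1 | h1 | h1
        · exact absurd h1 (Ne.symm hu)
        · exact absurd h1 hxa
        · exact h1.symm
      · rw [Walk.edges_cons]
        have := List.mem_getLast?_cons (y := s(u, x))
          (Option.mem_def.mpr hlast)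
        exact Option.mem_def.mp this

end Cycles

section CycleBound

variable (d : ℕ)

lemma no_proper_cycle_at_apex (w : (Gd d).Walk (apexV d) (apexV d))
    (hc : w.IsCycle) (hp : IsProperCycleWalk (colf d) w) : False := by
  cases w with
  | nil => exact hc.ne_nil rfl
  | @cons _ x _ h p =>
    have hx : x ≠ apexV d := h.ne'
    have hnp : ¬ p.Nil := Walk.not_nil_of_ne hx
    have hnd : p.support.Nodup := by
      have := hc.2
      rwa [Walk.support_cons, List.tail_cons] at this
    have hsplit : p.support.dropLast ++ [apexV d] = p.support := by
      have hg := p.getLast_support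
      have h2 := List.dropLast_append_getLast (p.support_ne_nil)
      rwa [hg] at h2
    have hnomem : apexV d ∉ p.support.dropLast := by
      intro hmem
      rw [← hsplit] at hnd
      exact List.disjoint_of_nodup_append hnd hmem (List.mem_singleton_self _)
    obtain ⟨v, hv, hcv, hlast⟩ := last_edge_aux d p rfl hnp hnomem
    -- Now derive the contradiction from the properness of the cycle.
    unfold IsProperCycleWalk at hp
    rw [Walk.edges_cons, List.map_cons] at hp
    set L := (p.edges.map (colf d))
    have hL : L.getLast? = some (colf d s(v, apexV d)) := by
      simp only [L, List.getLast?_map, hlast, Option.map_some]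
    have hL2 : (colf d s(apexV d, x) :: L).getLast? = some (colf d s(v, apexV d)) :=
      Option.mem_def.mp (List.mem_getLast?_cons (Option.mem_def.mpr hL))
    have htake : (colf d s(apexV d, x) :: L).take 1 = [colf d s(apexV d, x)] := by
      simp
    rw [htake] at hp
    have hlink := (List.isChain_append.mp hp).2.2
    have hne := hlink _ (Option.mem_def.mpr hL2) (colf d s(apexV d, x)) rfl
    apply hne
    rw [colf_apex', hcv]
    have hux : colf d s(apexV d, x) = cop d x := colf_apex d x
    rw [hux]

lemma cycle_bound (hd : 1 ≤ d) {x : Fin (d*d+1)} (w : (Gd d).Walk x x)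
    (hc : w.IsCycle) (hp : IsProperCycleWalk (colf d) w) : w.length ≤ d := by
  by_cases h : apexV d ∈ w.support
  · exfalso
    apply no_proper_cycle_at_apex d (w.rotate _ h) (hc.rotate h)
    unfold IsProperCycleWalk at hp ⊢
    obtain ⟨n, hn⟩ := (w.rotate_edges _ h).symm
    rw [← hn, List.map_rotate]
    exact chain'_wrap_rotate _ n hp
  · have hnd : w.support.tail.Nodup := hc.2
    have hmem : ∀ v ∈ w.support.tail, v ∈ copyF d (cop d x) := by
      intro v hv
      have hv' : v ∈ w.support := List.mem_of_mem_tail hv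
      simp only [copyF, Finset.mem_filter, Finset.mem_univ, true_and]
      exact ⟨fun h' => h (h' ▸ hv'), cop_const d w h v hv'⟩
    have := length_le_of_subset_copy d hd hnd hmem
    have hlen : w.support.tail.length = w.length := by
      have := w.length_support
      have h2 : w.support.length = w.support.tail.length + 1 := by
        rw [Walk.support_eq_cons]; simp
      omega
    omega

end CycleBound

section Degrees

variable (d : ℕ)

lemma exists_vertex (hd : 1 ≤ d) {j t : ℕ} (hj : j < d) (ht : t < d) :
    ∃ w : Fin (d*d+1), w ≠ apexV d ∧ cop d w = j ∧ w.val % d = t := by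
  have hlt : d*j + t < d*d := by nlinarith
  refine ⟨⟨d*j + t, by omega⟩, ?_, ?_, ?_⟩
  · intro h
    have := congrArg Fin.val h
    simp only [apexV] at this
    omega
  · show (d*j + t) / d = j
    rw [Nat.mul_add_div hd, Nat.div_eq_of_lt ht]
    omega
  · show (d*j + t) % d = t
    rw [Nat.mul_add_mod, Nat.mod_eq_of_lt ht]

lemma colorDegree_apex (hd : 1 ≤ d) : colorDegree (Gd d) (colf d) (apexV d) = d := by
  unfold colorDegree
  have hS : {col : ℕ | ∃ w, (Gd d).Adj (apexV d) w ∧ colf d s(apexV d, w) = col}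
      = ↑(Finset.range d) := by
    ext col
    simp only [Set.mem_setOf_eq, Finset.coe_range, Set.mem_Iio]
    constructor
    · rintro ⟨w, hw, rfl⟩
      rw [colf_apex]
      exact cop_lt d hd hw.ne'
    · intro hcol
      obtain ⟨w, hw1, hw2, _⟩ := exists_vertex d hd hcol hd
      exact ⟨w, ⟨Ne.symm hw1, Or.inl rfl⟩, by rw [colf_apex, hw2]⟩
  rw [hS, Set.ncard_coe_finset, Finset.card_range]

lemma fin_ext_of_cop_mod (hd : 1 ≤ d) {v w : Fin (d*d+1)}
    (h1 : cop d v = cop d w) (h2 : v.val % d = w.val % d) : v = w := by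
  apply Fin.ext
  have e1 : d * cop d v + v.val % d = v.val := Nat.div_add_mod _ _
  have e2 : d * cop d w + w.val % d = w.val := Nat.div_add_mod _ _
  rw [← e1, ← e2, h1, h2]

lemma colorDegree_nonapex (hd : 1 ≤ d) {v : Fin (d*d+1)} (hv : v ≠ apexV d) :
    colorDegree (Gd d) (colf d) v = d := by
  unfold colorDegree
  set j := cop d v with hjdef
  set r := v.val % d with hrdef
  have hj : j < d := cop_lt d hd hv
  have hr : r < d := Nat.mod_lt _ hd
  set g : Fin d → ℕ := fun t => if (t : ℕ) = r then j else d + (r + t) with hgdef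
  have hginj : Function.Injective g := by
    intro t1 t2 h
    simp only [hgdef] at h
    apply Fin.ext
    by_cases h1 : (t1 : ℕ) = r <;> by_cases h2 : (t2 : ℕ) = r <;>
      simp only [h1, h2, if_true, if_false, if_pos, if_neg, not_false_iff] at h <;>
      omega
  have hS : {col : ℕ | ∃ w, (Gd d).Adj v w ∧ colf d s(v, w) = col} = Set.range g := by
    ext col
    simp only [Set.mem_setOf_eq, Set.mem_range]
    constructor
    · rintro ⟨w, hw, rfl⟩
      by_cases hwa : w = apexV d
      · subst hwa
        refine ⟨⟨r, hr⟩, ?_⟩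
        rw [colf_apex']
        simp [hgdef, hjdef]
      · have hcw : cop d w = cop d v := by
          rcases hw.2 with h1 | h1 | h1
          · exact absurd h1 hv
          · exact absurd h1 hwa
          · exact h1.symm
        have hwr : w.val % d ≠ r := by
          intro he
          exact hw.1 (fin_ext_of_cop_mod d hd hcw he).symm
        refine ⟨⟨w.val % d, Nat.mod_lt _ hd⟩, ?_⟩
        rw [colf_same d hv hwa]
        simp [hgdef, hwr]
        exact hrdef
    · rintro ⟨t, rfl⟩
      by_cases ht : (t : ℕ) = r
      · refine ⟨apexV d, ⟨hv, Or.inr (Or.inl rfl)⟩, ?_⟩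
        rw [colf_apex']
        simp [hgdef, ht, hjdef]
      · obtain ⟨w, hw1, hw2, hw3⟩ := exists_vertex d hd hj t.isLt
        have hwv : v ≠ w := by
          intro he
          exact ht (by rw [← hw3, ← he])
        refine ⟨w, ⟨hwv, Or.inr (Or.inr (by rw [hw2]))⟩, ?_⟩
        rw [colf_same d hv hw1, hw3]
        simp [hgdef, ht]
        exact hrdef.symm
  rw [hS, ← Set.image_univ, Set.ncard_image_of_injective _ hginj, Set.ncard_univ]
  simp

lemma minColorDegree_Gd (hd : 1 ≤ d) : minColorDegree (Gd d) (colf d) = d := by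
  unfold minColorDegree
  have hr : Set.range (colorDegree (Gd d) (colf d)) = {d} := by
    ext n
    simp only [Set.mem_range, Set.mem_singleton_iff]
    constructor
    · rintro ⟨v, rfl⟩
      by_cases hv : v = apexV d
      · subst hv; exact colorDegree_apex d hd
      · exact colorDegree_nonapex d hd hv
    · intro hn
      rw [hn]
      exact ⟨apexV d, colorDegree_apex d hd⟩
  rw [hr, csInf_singleton]

end Degrees

/-- For every integer `d ≥ 2` there exists an edge-coloured graph with minimum colour
degree exactly `d` in which every properly coloured path has length at most `2d` and
every properly coloured cycle has length at most `d`. -/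
theorem exists_graph_short_pc_paths_and_cycles (d : ℕ) (hd : 2 ≤ d) :
    ∃ (m : ℕ) (G : SimpleGraph (Fin m)) (c : Sym2 (Fin m) → ℕ),
      minColorDegree G c = d ∧
      (∀ (x y : Fin m) (w : G.Walk x y), w.IsPath → IsProperWalk c w →
        w.length ≤ 2 * d) ∧
      (∀ (x : Fin m) (w : G.Walk x x), w.IsCycle → IsProperCycleWalk c w →
        w.length ≤ d) := by
  refine ⟨d*d+1, Gd d, colf d, minColorDegree_Gd d (by omega), ?_, ?_⟩
  · intro x y w hw _
    exact path_bound d (by omega) w hw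
  · intro x w hc hp
    exact cycle_bound d (by omega) w hc hp
end

section
/- For all integers d ≥ 1 and n ≥ 3d/2 there exists a connected edge-coloured graph G on n vertices with minimum colour degree δ^c(G) = d such that every properly coloured path in G has length at most ⌊3d/2⌋. (Such a graph is obtained by taking a rainbow complete graph on a set X = {x_1, …, x_d}, an independent set Y of n − d further vertices, and joining x_i to every vertex of Y by an edge of a new colour c_i, for each i ∈ [d].) -/
open SimpleGraph

open SimpleGraph

/-! ### Auxiliary construction -/

/-- The graph: a clique on the first `d` vertices, with every other vertex joined to
each clique vertex. -/
def GrAux (d n : ℕ) : SimpleGraph (Fin n) where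
  Adj u v := u ≠ v ∧ (u.val < d ∨ v.val < d)
  symm := ⟨by intro u v h; exact ⟨h.1.symm, h.2.symm⟩⟩
  loopless := ⟨by intro u h; exact h.1 rfl⟩

/-- The colouring: clique edges are rainbow (colours `≥ d`), and an edge between the
clique vertex `x_i` and a non-clique vertex gets colour `i`. -/
def colAux (d n : ℕ) : Sym2 (Fin n) → ℕ :=
  Sym2.lift ⟨fun u v => if u.val < d ∧ v.val < d then
      d + min u.val v.val * d + max u.val v.val else min u.val v.val, by
    intro u v
    simp only [min_comm u.val v.val, max_comm u.val v.val, and_comm]⟩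

lemma colAux_cross {d n : ℕ} {u v : Fin n} (hu : d ≤ u.val) (hv : v.val < d) :
    colAux d n s(u, v) = v.val := by
  simp only [colAux, Sym2.lift_mk]
  rw [if_neg (by omega)]
  omega

lemma colAux_clique {d n : ℕ} {u v : Fin n} (hu : u.val < d) (hv : v.val < d) :
    colAux d n s(u, v) = d + min u.val v.val * d + max u.val v.val := by
  simp only [colAux, Sym2.lift_mk]
  rw [if_pos ⟨hu, hv⟩]

lemma GrAux_adj {d n : ℕ} {u v : Fin n} :
    (GrAux d n).Adj u v ↔ u ≠ v ∧ (u.val < d ∨ v.val < d) := Iff.rfl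

/-- The key counting lemma: on any properly coloured walk, vertices outside the clique
appear with density at most one third (up to boundary effects), because two such
vertices on the walk must be at least three steps apart. -/
theorem countAux (d n : ℕ) {u v : Fin n} (w : (GrAux d n).Walk u v)
    (hw : IsProperWalk (colAux d n) w) :
    3 * w.support.countP (fun x => d ≤ x.val) ≤
      w.length + (if d ≤ u.val then 3 else 2) := by
  match w with
  | .nil =>
    by_cases hu : d ≤ u.val <;>
      simp [Walk.support_nil, List.countP_cons, List.countP_nil, hu]
  | .cons h₁ Walk.nil =>
    by_cases hu : d ≤ u.val
    · have hv : v.val < d := by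
        rcases (GrAux_adj.mp h₁).2 with h | h <;> omega
      simp [Walk.support_cons, Walk.support_nil, List.countP_cons, hu,
        Nat.not_le.mpr hv]
    · by_cases hv : d ≤ v.val <;>
        simp [Walk.support_cons, Walk.support_nil, List.countP_cons, hu, hv]
  | .cons h₁ (Walk.cons h₂ w') =>
    rename_i v₁ v₂
    by_cases hu : d ≤ u.val
    · -- u ∈ Y, so v₁ ∈ X and v₂ ∈ X
      have hv₁ : v₁.val < d := by
        rcases (GrAux_adj.mp h₁).2 with h | h <;> omega
      have hchain : colAux d n s(u, v₁) ≠ colAux d n s(v₁, v₂) ∧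
          IsProperWalk (colAux d n) (Walk.cons h₂ w') := by
        have := hw
        simp only [IsProperWalk, Walk.edges_cons, List.map_cons, List.Chain', List.isChain_cons_cons] at this ⊢
        obtain ⟨h, h'⟩ := this
        refine ⟨h, ?_⟩
        cases w' <;> simp_all [Walk.edges_cons, List.Chain', List.isChain_cons_cons]
      have hv₂ : v₂.val < d := by
        by_contra hv₂
        push_neg at hv₂
        apply hchain.1
        rw [colAux_cross hu hv₁,
          show (s(v₁, v₂) : Sym2 (Fin n)) = s(v₂, v₁) from Sym2.eq_swap,
          colAux_cross hv₂ hv₁]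
      have hw' : IsProperWalk (colAux d n) w' := by
        have := hchain.2
        simp only [IsProperWalk, Walk.edges_cons, List.map_cons] at this
        exact this.tail
      have ih := countAux d n w' hw'
      rw [if_neg (Nat.not_le.mpr hv₂)] at ih
      simp only [Walk.support_cons, List.countP_cons, Walk.length_cons]
      simp [hu, Nat.not_le.mpr hv₁, Nat.not_le.mpr hv₂] at *
      omega
    · -- u ∈ X : recurse on the tail
      have hw' : IsProperWalk (colAux d n) (Walk.cons h₂ w') := by
        have := hw
        simp only [IsProperWalk, Walk.edges_cons, List.map_cons] at this ⊢
        exact this.tail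
      have ih := countAux d n (Walk.cons h₂ w') hw'
      simp only [Walk.support_cons, List.countP_cons, Walk.length_cons] at ih ⊢
      by_cases hv₁ : d ≤ v₁.val <;> simp [hu, hv₁] at ih ⊢ <;> omega
termination_by w.length
decreasing_by all_goals simp [Walk.length_cons] <;> omega

theorem path_bound_aux (d n : ℕ) {x y : Fin n} (w : (GrAux d n).Walk x y)
    (hp : w.IsPath) (hw : IsProperWalk (colAux d n) w) : w.length ≤ 3 * d / 2 := by
  have h1 := countAux d n w hw
  have h2 : w.support.length = w.length + 1 := w.length_support
  have hsplit : w.support.length = w.support.countP (fun x : Fin n => d ≤ x.val)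
      + w.support.countP (fun x : Fin n => ¬ d ≤ x.val) := by
    rw [List.length_eq_countP_add_countP (fun x : Fin n => d ≤ x.val) (l := w.support)]
    congr 1
    apply List.countP_congr
    intro a _
    simp
  have hX : w.support.countP (fun x : Fin n => ¬ d ≤ x.val) ≤ d := by
    rw [List.countP_eq_length_filter]
    set L := w.support.filter (fun x : Fin n => ¬ d ≤ x.val) with hL
    have hnd : L.Nodup := hp.support_nodup.filter _
    have hnd2 : (L.map Fin.val).Nodup := hnd.map Fin.val_injective
    have hsub : (L.map Fin.val).toFinset ⊆ Finset.range d := by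
      intro a ha
      rw [List.mem_toFinset] at ha
      obtain ⟨z, hz, rfl⟩ := List.mem_map.mp ha
      rw [hL, List.mem_filter] at hz
      simp only [decide_eq_true_eq] at hz
      simp only [Finset.mem_range]
      omega
    calc L.length = (L.map Fin.val).length := (List.length_map _).symm
      _ = (L.map Fin.val).toFinset.card := (List.toFinset_card_of_nodup hnd2).symm
      _ ≤ (Finset.range d).card := Finset.card_le_card hsub
      _ = d := Finset.card_range d
  have h3 : (if d ≤ x.val then 3 else 2) ≤ 3 := by split <;> omega
  rw [Nat.le_div_iff_mul_le (by norm_num)]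
  omega

lemma pair_eq_aux {d a b a' b' : ℕ} (hb : b < d) (hb' : b' < d)
    (h : a * d + b = a' * d + b') : a = a' ∧ b = b' := by
  have hd0 : 0 < d := by omega
  have h1 : ∀ x y : ℕ, y < d → (x * d + y) / d = x := by
    intro x y hy
    rw [mul_comm, Nat.mul_add_div hd0, Nat.div_eq_of_lt hy, add_zero]
  have h2 : ∀ x y : ℕ, y < d → (x * d + y) % d = y := by
    intro x y hy
    rw [mul_comm, Nat.mul_add_mod, Nat.mod_eq_of_lt hy]
  constructor
  · rw [← h1 a b hb, ← h1 a' b' hb', h]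
  · rw [← h2 a b hb, ← h2 a' b' hb', h]

lemma colorDegree_big_aux {d n : ℕ} (hd : 1 ≤ d) (hdn : d < n) {v : Fin n}
    (hv : d ≤ v.val) : colorDegree (GrAux d n) (colAux d n) v = d := by
  have hset : {c : ℕ | ∃ w, (GrAux d n).Adj v w ∧ colAux d n s(v, w) = c}
      = ↑(Finset.range d) := by
    ext a
    simp only [Set.mem_setOf_eq, Finset.coe_range, Set.mem_Iio]
    constructor
    · rintro ⟨w, hadj, rfl⟩
      obtain ⟨hne, hor⟩ := GrAux_adj.mp hadj
      have hw : w.val < d := by rcases hor with h | h <;> omega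
      rw [colAux_cross hv hw]
      exact hw
    · intro ha
      refine ⟨⟨a, by omega⟩, GrAux_adj.mpr ⟨?_, Or.inr (by simpa using ha)⟩, ?_⟩
      · intro h
        have := congrArg Fin.val h
        simp at this
        omega
      · rw [colAux_cross hv (by simpa using ha)]
  rw [colorDegree, hset, Set.ncard_coe_finset, Finset.card_range]

lemma colorDegree_small_aux {d n : ℕ} (hd : 1 ≤ d) (hdn : d < n) {v : Fin n}
    (hv : v.val < d) : colorDegree (GrAux d n) (colAux d n) v = d := by
  set g : ℕ → ℕ := fun j => d + min v.val j * d + max v.val j with hg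
  have hgd : ∀ j, d ≤ g j := by
    intro j
    rw [hg]
    exact le_trans (Nat.le_add_right _ _) (Nat.le_add_right _ _)
  have hset : {c : ℕ | ∃ w, (GrAux d n).Adj v w ∧ colAux d n s(v, w) = c}
      = ↑(insert v.val (((Finset.range d).erase v.val).image g)) := by
    ext a
    simp only [Set.mem_setOf_eq, Finset.coe_insert, Set.mem_insert_iff,
      Finset.coe_image, Set.mem_image, Finset.mem_coe, Finset.mem_erase,
      Finset.mem_range]
    constructor
    · rintro ⟨w, hadj, rfl⟩
      obtain ⟨hne, hor⟩ := GrAux_adj.mp hadj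
      by_cases hw : w.val < d
      · right
        refine ⟨w.val, ⟨fun h => hne (Fin.val_injective h.symm), hw⟩, ?_⟩
        rw [colAux_clique hv hw, hg]
      · left
        rw [show (s(v, w) : Sym2 (Fin n)) = s(w, v) from Sym2.eq_swap,
          colAux_cross (by omega) hv]
    · rintro (rfl | ⟨j, ⟨hjv, hjd⟩, rfl⟩)
      · refine ⟨⟨d, hdn⟩, GrAux_adj.mpr ⟨?_, Or.inl hv⟩, ?_⟩
        · intro h
          have := congrArg Fin.val h
          simp at this
          omega
        · rw [show (s(v, ⟨d, hdn⟩) : Sym2 (Fin n)) = s(⟨d, hdn⟩, v) from Sym2.eq_swap,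
            colAux_cross (by simp) hv]
      · refine ⟨⟨j, by omega⟩, GrAux_adj.mpr ⟨?_, Or.inl hv⟩, ?_⟩
        · intro h
          have := congrArg Fin.val h
          simp at this
          omega
        · rw [colAux_clique hv (by simpa using hjd)]
  rw [colorDegree, hset, Set.ncard_coe_finset]
  have hnotmem : v.val ∉ ((Finset.range d).erase v.val).image g := by
    intro hmem
    obtain ⟨j, hj, hgj⟩ := Finset.mem_image.mp hmem
    have := hgd j
    omega
  rw [Finset.card_insert_of_notMem hnotmem,
    Finset.card_image_of_injOn, Finset.card_erase_of_mem (Finset.mem_range.mpr hv),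
    Finset.card_range]
  · omega
  · intro j hj j' hj' hjj'
    simp only [Finset.mem_coe, Finset.mem_erase, Finset.mem_range] at hj hj'
    rw [hg] at hjj'
    simp only at hjj'
    have h1 : max v.val j < d := by omega
    have h2 : max v.val j' < d := by omega
    have := pair_eq_aux (a := min v.val j) (a' := min v.val j') h1 h2 (by omega)
    omega

/-- For all integers `d ≥ 1` and `n ≥ 3d/2` there exists a connected edge-coloured
graph on `n` vertices with minimum colour degree exactly `d` in which every properly
coloured path has length at most `⌊3d/2⌋`. -/
theorem exists_connected_graph_short_pc_paths (d n : ℕ) (hd : 1 ≤ d) (hn : 3 * d ≤ 2 * n) :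
    ∃ (G : SimpleGraph (Fin n)) (c : Sym2 (Fin n) → ℕ),
      G.Connected ∧ minColorDegree G c = d ∧
      (∀ (x y : Fin n) (w : G.Walk x y), w.IsPath → IsProperWalk c w →
        w.length ≤ 3 * d / 2) := by
  have hdn : d < n := by omega
  have hn0 : 0 < n := by omega
  refine ⟨GrAux d n, colAux d n, ?_, ?_, fun x y w hp hw => path_bound_aux d n w hp hw⟩
  · -- connectedness
    rw [connected_iff]
    refine ⟨?_, ⟨⟨0, hn0⟩⟩⟩
    intro u v
    by_cases huv : u = v
    · exact huv ▸ Reachable.refl u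
    · set z : Fin n := ⟨0, hn0⟩ with hz
      have hadj : ∀ x : Fin n, x ≠ z → (GrAux d n).Adj z x := by
        intro x hx
        exact GrAux_adj.mpr ⟨hx.symm, Or.inl (by simp [hz]; omega)⟩
      by_cases hu : u = z
      · subst hu
        exact (hadj v (fun h => huv h.symm)).reachable
      · by_cases hv : v = z
        · subst hv
          exact (hadj u hu).symm.reachable
        · exact ((hadj u hu).symm.reachable).trans (hadj v hv).reachable
  · -- minimum colour degree
    have hcd : ∀ v : Fin n, colorDegree (GrAux d n) (colAux d n) v = d := by
      intro v
      by_cases h : v.val < d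
      · exact colorDegree_small_aux hd hdn h
      · exact colorDegree_big_aux hd hdn (by omega)
    have hrange : Set.range (colorDegree (GrAux d n) (colAux d n)) = {d} := by
      ext a
      simp only [Set.mem_range, Set.mem_singleton_iff]
      constructor
      · rintro ⟨v, rfl⟩
        exact hcd v
      · rintro rfl
        exact ⟨⟨0, hn0⟩, hcd _⟩
    rw [minColorDegree, hrange, csInf_singleton]
end

section
/- Let G be an edge-coloured graph with minimum colour degree δ^c(G) ≥ d and let P = (v_1, …, v_l) be a properly coloured path in G that is not extensible. If P has no crossing with respect to some choice of colour neighbourhoods N^c(v_1;P) and N^c(v_l;P), then l ≥ 2d + 1, i.e. P has length at least 2d. -/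
open SimpleGraph

open SimpleGraph

/-- A properly coloured path is extensible if a vertex outside it can be appended at
either end to give a longer properly coloured path. -/
def ExtensibleWalk {V C : Type*} {G : SimpleGraph V} (c : Sym2 V → C) {u v : V}
    (w : G.Walk u v) : Prop :=
  (∃ (x : V) (h : G.Adj v x), (w.concat h).IsPath ∧ IsProperWalk c (w.concat h)) ∨
  (∃ (x : V) (h : G.Adj x u), (SimpleGraph.Walk.cons h w).IsPath ∧
    IsProperWalk c (SimpleGraph.Walk.cons h w))

/-- `N` is a colour neighbourhood of `v`: a set of neighbours of `v` joined to `v` by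
pairwise differently coloured edges, of maximal size (the colour degree of `v`). -/
def IsColorNbhd {V C : Type*} (G : SimpleGraph V) (c : Sym2 V → C) (v : V)
    (N : Finset V) : Prop :=
  (∀ x ∈ N, G.Adj v x) ∧
  (∀ x ∈ N, ∀ y ∈ N, x ≠ y → c s(v, x) ≠ c s(v, y)) ∧
  N.card = colorDegree G c v

lemma properWalk_reverse {V C : Type*} {G : SimpleGraph V} (c : Sym2 V → C) {u v : V}
    (w : G.Walk u v) (h : IsProperWalk c w) : IsProperWalk c w.reverse := by
  unfold IsProperWalk at *
  rw [Walk.edges_reverse, List.map_reverse, List.Chain', List.isChain_reverse]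
  exact List.IsChain.imp (fun a b hab => hab.symm) h

lemma aux_mem_support {V C : Type*} {G : SimpleGraph V} (c : Sym2 V → C) {x y : V}
    (w : G.Walk x y) (hp : w.IsPath) (hpc : IsProperWalk c w)
    (hne : ¬ ∃ (u : V) (h : G.Adj u x), (Walk.cons h w).IsPath ∧
      IsProperWalk c (Walk.cons h w))
    (N1 : Finset V) (hadj : ∀ z ∈ N1, G.Adj x z)
    (hdis : ∀ a ∈ N1, ∀ b ∈ N1, a ≠ b → c s(x, a) ≠ c s(x, b))
    (hsnd : ∀ z, w.support[1]? = some z → z ∈ N1) :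
    ∀ u ∈ N1, u ∈ w.support := by
  intro u hu
  by_contra hu'
  apply hne
  refine ⟨u, (hadj u hu).symm, hp.cons hu', ?_⟩
  unfold IsProperWalk
  rw [Walk.edges_cons, List.map_cons, List.Chain', List.isChain_cons]
  refine ⟨?_, hpc⟩
  cases w with
  | nil => simp
  | @cons _ b _ h' w' =>
    intro col hcol
    simp only [Walk.edges_cons, List.map_cons, List.head?_cons, Option.mem_def,
      Option.some.injEq] at hcol
    subst hcol
    have hb : b ∈ N1 := by
      apply hsnd
      rw [Walk.support_cons, w'.support_eq_cons]
      simp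
    have hub : u ≠ b := by
      rintro rfl
      exact hu' (by rw [Walk.support_cons, w'.support_eq_cons]; simp)
    have := hdis u hu b hb hub
    rw [Sym2.eq_swap] at this
    exact fun h => this (h ▸ rfl)

/-- If a non-extensible properly coloured path has no crossing with respect to some
choice of colour neighbourhoods of its endpoints (containing the second and the
second-to-last vertex respectively), then its length is at least `2d`. -/
theorem length_of_noncrossing_nonextensible_pc_path {V C : Type*} [Fintype V] (d : ℕ)
    (G : SimpleGraph V) (c : Sym2 V → C) (hδ : d ≤ minColorDegree G c)
    {x y : V} (w : G.Walk x y) (hp : w.IsPath) (hpc : IsProperWalk c w)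
    (hne : ¬ ExtensibleWalk c w)
    (N1 Nl : Finset V) (hN1 : IsColorNbhd G c x N1) (hNl : IsColorNbhd G c y Nl)
    (hsnd : ∀ z, w.support[1]? = some z → z ∈ N1)
    (hsnd' : ∀ z, w.support.reverse[1]? = some z → z ∈ Nl)
    (hnc : ¬ ∃ i j : Fin w.support.length, i < j ∧
      w.support.get i ∈ Nl ∧ w.support.get j ∈ N1) :
    2 * d ≤ w.length := by
  classical
  obtain ⟨hadj1, hdis1, hcard1⟩ := hN1
  obtain ⟨hadjl, hdisl, hcardl⟩ := hNl
  have hmin : ∀ v : V, d ≤ colorDegree G c v := fun v => le_trans hδ (Nat.sInf_le ⟨v, rfl⟩)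
  have hd1 : d ≤ N1.card := hcard1 ▸ hmin x
  have hdl : d ≤ Nl.card := hcardl ▸ hmin y
  rcases Nat.eq_zero_or_pos d with rfl | hdpos
  · simp
  have hsub1 : ∀ u ∈ N1, u ∈ w.support :=
    aux_mem_support c w hp hpc (fun h => hne (Or.inr h)) N1 hadj1 hdis1 hsnd
  have hsubl : ∀ u ∈ Nl, u ∈ w.support := by
    have h2 : ∀ u ∈ Nl, u ∈ w.reverse.support := by
      apply aux_mem_support c w.reverse hp.reverse (properWalk_reverse c w hpc) _ Nl hadjl hdisl
      · intro z hz; apply hsnd'; rwa [Walk.support_reverse] at hz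
      · rintro ⟨u, h, hP, hPr⟩
        apply hne; left
        refine ⟨u, h.symm, ?_, ?_⟩
        · have := hP.reverse
          rwa [Walk.reverse_cons, Walk.reverse_reverse] at this
        · have := properWalk_reverse c _ hPr
          rwa [Walk.reverse_cons, Walk.reverse_reverse] at this
    intro u hu
    have := h2 u hu
    rwa [Walk.support_reverse, List.mem_reverse] at this
  set s := w.support with hs
  have hnd : s.Nodup := hp.support_nodup
  have hLlen : s.length = w.length + 1 := by rw [hs, Walk.length_support]
  have idxlt : ∀ u ∈ s, s.idxOf u < s.length := fun u hu => List.idxOf_lt_length_iff.mpr hu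
  have hget : ∀ u (h : u ∈ s), s.get ⟨s.idxOf u, idxlt u h⟩ = u :=
    fun u h => List.idxOf_get _
  have hle : ∀ u ∈ N1, ∀ v ∈ Nl, s.idxOf u ≤ s.idxOf v := by
    intro u hu v hv
    by_contra hlt
    push_neg at hlt
    exact hnc ⟨⟨s.idxOf v, idxlt v (hsubl v hv)⟩, ⟨s.idxOf u, idxlt u (hsub1 u hu)⟩,
      Fin.mk_lt_mk.mpr hlt, by rw [hget v (hsubl v hv)]; exact hv,
      by rw [hget u (hsub1 u hu)]; exact hu⟩
  have hpos1 : ∀ u ∈ N1, 1 ≤ s.idxOf u := by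
    intro u hu
    rcases Nat.eq_zero_or_pos (s.idxOf u) with h0 | h
    · exfalso
      have hux : u ≠ x := (hadj1 u hu).ne'
      apply hux
      have hin := hsub1 u hu
      have := hget u hin
      rw [← this]
      have hx0 : s.get ⟨s.idxOf u, idxlt u hin⟩ = s.head (by simp [hs]) := by
        exact (List.head_eq_getElem _).symm ▸ by
          simp [List.get_eq_getElem, h0, List.head_eq_getElem]
      rw [hx0]
      exact w.head_support
    · exact h
  have hlast : ∀ v ∈ Nl, s.idxOf v < s.length - 1 := by
    intro v hv
    have hin := hsubl v hv
    have hlt := idxlt v hin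
    have hvy : v ≠ y := (hadjl v hv).ne'
    rcases Nat.lt_or_ge (s.idxOf v) (s.length - 1) with h | h
    · exact h
    · exfalso
      have heq : s.idxOf v = s.length - 1 := by omega
      apply hvy
      have := hget v hin
      rw [← this]
      have : s.get ⟨s.idxOf v, hlt⟩ = s.getLast (by simp [hs]) := by
        rw [List.getLast_eq_getElem]
        simp [List.get_eq_getElem, heq]
      rw [this]
      exact w.getLast_support
  obtain ⟨v0, hv0, hv0min⟩ := Finset.exists_min_image Nl (fun v => s.idxOf v)
    (Finset.card_pos.mp (lt_of_lt_of_le hdpos hdl))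
  set m := s.idxOf v0 with hm
  have hinj : ∀ (N : Finset V), (∀ u ∈ N, u ∈ s) →
      Set.InjOn (fun u => s.idxOf u) ↑N := by
    intro N hN a ha b hb hab
    have h1 := hget a (hN a ha)
    have h2 := hget b (hN b hb)
    rw [← h1, ← h2]
    congr 1
    exact Fin.ext hab
  have hcardN1 : N1.card ≤ (Finset.Icc 1 m).card := by
    apply Finset.card_le_card_of_injOn (fun u => s.idxOf u)
    · intro u hu
      rw [Finset.mem_coe, Finset.mem_Icc]
      exact ⟨hpos1 u hu, hle u hu v0 hv0⟩
    · exact hinj N1 hsub1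
  have hcardNl : Nl.card ≤ (Finset.Icc m (s.length - 2)).card := by
    apply Finset.card_le_card_of_injOn (fun u => s.idxOf u)
    · intro v hv
      rw [Finset.mem_coe, Finset.mem_Icc]; beta_reduce
      have := hlast v hv
      exact ⟨hv0min v hv, by omega⟩
    · exact hinj Nl hsubl
  rw [Nat.card_Icc] at hcardN1 hcardNl
  have hmL := hlast v0 hv0
  omega
end

section
/- Let G be an edge-coloured graph with minimum colour degree δ^c(G) ≥ 2, and let P be a maximal properly coloured path in G with endpoints x and y. If P has a crossing with respect to some choice of colour neighbourhoods N^c(x;P) and N^c(y;P), then the induced subgraph G[V(P)] contains a properly coloured cycle. -/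
open SimpleGraph

open SimpleGraph

/-- The list of edges (as unordered pairs) between consecutive entries of a list. -/
def consecEdges {V : Type*} (L : List V) : List (Sym2 V) :=
  List.zipWith (fun a b => s(a, b)) L L.tail

/-- The nonempty list `L` of distinct vertices forms a properly coloured path:
consecutive vertices are adjacent and consecutive edges receive distinct colours. -/
def IsProperPathList {V C : Type*} (G : SimpleGraph V) (c : Sym2 V → C)
    (L : List V) : Prop :=
  L ≠ [] ∧ L.Nodup ∧
  (∀ e ∈ consecEdges L, e ∈ G.edgeSet) ∧
  List.Chain' (· ≠ ·) ((consecEdges L).map c)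

/-- The list `L` of distinct vertices forms a properly coloured cycle: consecutive
vertices (cyclically) are adjacent, and consecutive edges (cyclically) receive
distinct colours. -/
def IsProperCycleList {V C : Type*} (G : SimpleGraph V) (c : Sym2 V → C)
    (L : List V) : Prop :=
  3 ≤ L.length ∧ L.Nodup ∧
  (∀ e ∈ consecEdges (L ++ L.take 1), e ∈ G.edgeSet) ∧
  List.Chain' (· ≠ ·) ((consecEdges (L ++ L.take 2)).map c)

/-- A properly coloured path is extensible if a new vertex can be appended at either
end so that the result is again a properly coloured path. -/
def ExtensibleList {V C : Type*} (G : SimpleGraph V) (c : Sym2 V → C)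
    (L : List V) : Prop :=
  ∃ x : V, IsProperPathList G c (L ++ [x]) ∨ IsProperPathList G c (x :: L)

/-- One step of rotation (with pivot the `j`-th vertex, keeping the first endpoint
fixed) or reflection of a properly coloured path. -/
def RotRefStep {V C : Type*} (G : SimpleGraph V) (c : Sym2 V → C)
    (L L' : List V) : Prop :=
  L' = L.reverse ∨
  (IsProperPathList G c L' ∧
    ∃ j, 1 ≤ j ∧ j + 2 ≤ L.length ∧ L' = L.take j ++ (L.drop j).reverse)

/-- A properly coloured path is maximal if no path obtained from it by a sequence of
rotations and reflections is extensible. -/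
def MaximalPathList {V C : Type*} (G : SimpleGraph V) (c : Sym2 V → C)
    (L : List V) : Prop :=
  ∀ L', Relation.ReflTransGen (RotRefStep G c) L L' → ¬ ExtensibleList G c L'

section CrossingAux

variable {V C : Type*}

theorem consecEdges_length (L : List V) : (consecEdges L).length = L.length - 1 := by
  simp [consecEdges]

theorem consecEdges_getElem (L : List V) (i : ℕ) (h : i + 1 < L.length)
    {h' : i < (consecEdges L).length} :
    (consecEdges L)[i] = s(L[i], L[i + 1]) := by
  simp [consecEdges, List.getElem_zipWith, List.getElem_tail]

def nth {V : Type*} (L : List V) (d : V) (i : ℕ) : V := L.getD i d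

theorem nth_eq_getElem {L : List V} (d : V) {i : ℕ} (h : i < L.length) :
    nth L d i = L[i] := List.getD_eq_getElem L d h

theorem nth_inj {L : List V} (d : V) (hnd : L.Nodup) {i j : ℕ}
    (hi : i < L.length) (hj : j < L.length) (h : nth L d i = nth L d j) : i = j := by
  rw [nth_eq_getElem d hi, nth_eq_getElem d hj] at h
  exact (List.Nodup.getElem_inj_iff hnd).mp h

theorem cswap (c : Sym2 V → C) (u v : V) : c s(u, v) = c s(v, u) := by
  rw [Sym2.eq_swap]

theorem col_symm {c : Sym2 V → C} {u v w : V}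
    (h : c s(u, v) ≠ c s(v, w)) : c s(w, v) ≠ c s(v, u) := by
  intro hh
  apply h
  rw [cswap c u v, cswap c v w]
  exact hh.symm

theorem cycle_builder {G : SimpleGraph V} {c : Sym2 V → C}
    (M : List V) (w : ℕ → V)
    (h3 : 3 ≤ M.length)
    (hw : ∀ i, (h : i < M.length) → M[i] = w i)
    (hper : ∀ i, w (i + M.length) = w i)
    (hnd : M.Nodup)
    (hadj : ∀ i, i < M.length → G.Adj (w i) (w (i + 1)))
    (hcol : ∀ i, i < M.length → c s(w i, w (i + 1)) ≠ c s(w (i + 1), w (i + 2))) :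
    IsProperCycleList G c M := by
  set m := M.length with hmdef
  have hper0 : w m = w 0 := by simpa using hper 0
  have hper1 : w (m + 1) = w 1 := by simpa [Nat.add_comm] using hper 1
  have hlen1 : (M ++ M.take 1).length = m + 1 := by
    simp only [List.length_append, List.length_take]; omega
  have hlen2 : (M ++ M.take 2).length = m + 2 := by
    simp only [List.length_append, List.length_take]; omega
  have hw2 : ∀ i, (h : i < m + 2) → (M ++ M.take 2)[i]'(by rw [hlen2]; exact h) = w i := by
    intro i h
    rcases Nat.lt_or_ge i m with hi | hi
    · rw [List.getElem_append_left hi]; exact hw i hi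
    · have hcases : i = m ∨ i = m + 1 := by omega
      rcases hcases with rfl | rfl
      · rw [List.getElem_append_right (Nat.le_refl m)]
        simp only [(by omega : m - M.length = 0), List.getElem_take]
        rw [hw 0 (by omega), hper0]
      · rw [List.getElem_append_right (by omega : m ≤ m + 1)]
        simp only [(by omega : m + 1 - M.length = 1), List.getElem_take]
        rw [hw 1 (by omega), hper1]
  have hw1 : ∀ i, (h : i < m + 1) → (M ++ M.take 1)[i]'(by rw [hlen1]; exact h) = w i := by
    intro i h
    rcases Nat.lt_or_ge i m with hi | hi
    · rw [List.getElem_append_left hi]; exact hw i hi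
    · have : i = m := by omega
      subst this
      rw [List.getElem_append_right (Nat.le_refl m)]
      simp only [(by omega : m - M.length = 0), List.getElem_take]
      rw [hw 0 (by omega), hper0]
  refine ⟨h3, hnd, ?_, ?_⟩
  · intro e he
    obtain ⟨i, hi, rfl⟩ := List.getElem_of_mem he
    have hi' : i < m := by
      rw [consecEdges_length, hlen1] at hi; omega
    rw [consecEdges_getElem _ i (by omega)]
    rw [hw1 i (by omega), hw1 (i+1) (by omega)]
    exact G.mem_edgeSet.mpr (hadj i hi')
  · rw [List.Chain', List.isChain_iff_getElem]
    intro i hi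
    have hlen3 : (consecEdges (M ++ M.take 2)).length = m + 1 := by
      rw [consecEdges_length, hlen2]; omega
    have hi' : i < m := by simp [hlen3] at hi; omega
    simp only [List.get_eq_getElem, List.getElem_map]
    rw [consecEdges_getElem _ i (by omega), consecEdges_getElem _ (i+1) (by omega)]
    rw [hw2 i (by omega), hw2 (i+1) (by omega), hw2 (i+2) (by omega)]
    exact hcol i hi'

theorem path_builder {G : SimpleGraph V} {c : Sym2 V → C}
    (M : List V) (w : ℕ → V)
    (h1 : M ≠ [])
    (hw : ∀ i, (h : i < M.length) → M[i] = w i)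
    (hnd : M.Nodup)
    (hadj : ∀ i, i + 1 < M.length → G.Adj (w i) (w (i + 1)))
    (hcol : ∀ i, i + 2 < M.length → c s(w i, w (i + 1)) ≠ c s(w (i + 1), w (i + 2))) :
    IsProperPathList G c M := by
  refine ⟨h1, hnd, ?_, ?_⟩
  · intro e he
    obtain ⟨i, hi, rfl⟩ := List.getElem_of_mem he
    have hi' : i + 1 < M.length := by rw [consecEdges_length] at hi; omega
    rw [consecEdges_getElem _ i hi']
    rw [hw i (by omega), hw (i + 1) (by omega)]
    exact G.mem_edgeSet.mpr (hadj i hi')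
  · rw [List.Chain', List.isChain_iff_getElem]
    intro i hi
    simp only [List.length_map, consecEdges_length] at hi
    simp only [List.get_eq_getElem, List.getElem_map]
    rw [consecEdges_getElem _ i (by omega), consecEdges_getElem _ (i + 1) (by omega)]
    rw [hw i (by omega), hw (i + 1) (by omega), hw (i + 2) (by omega)]
    exact hcol i (by omega)

theorem path_adj {G : SimpleGraph V} {c : Sym2 V → C} {L : List V} (d : V)
    (hL : IsProperPathList G c L) :
    ∀ i, i + 1 < L.length → G.Adj (nth L d i) (nth L d (i + 1)) := by
  intro i h
  rw [nth_eq_getElem d (by omega), nth_eq_getElem d (by omega)]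
  rw [← G.mem_edgeSet]
  have h2 : (consecEdges L)[i]'(by rw [consecEdges_length]; omega) = s(L[i], L[i+1]) :=
    consecEdges_getElem L i h
  rw [← h2]
  exact hL.2.2.1 _ (List.getElem_mem _)

theorem path_chain {G : SimpleGraph V} {c : Sym2 V → C} {L : List V} (d : V)
    (hL : IsProperPathList G c L) :
    ∀ i, i + 2 < L.length →
      c s(nth L d i, nth L d (i+1)) ≠ c s(nth L d (i+1), nth L d (i+2)) := by
  intro i h
  rw [nth_eq_getElem d (by omega), nth_eq_getElem d (by omega),
    nth_eq_getElem d (by omega)]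
  have hch := hL.2.2.2
  rw [List.Chain', List.isChain_iff_getElem] at hch
  have := hch i (by simp only [List.length_map, consecEdges_length]; omega)
  simp only [List.get_eq_getElem, List.getElem_map] at this
  rw [consecEdges_getElem _ i (by omega), consecEdges_getElem _ (i+1) (by omega)]
    at this
  exact this

theorem nbhd_subset_left {G : SimpleGraph V} {c : Sym2 V → C} {L : List V} (d : V)
    (hL : IsProperPathList G c L) (hmax : MaximalPathList G c L)
    {N1 : Finset V} (hN1 : IsColorNbhd G c (nth L d 0) N1)
    (hsnd : nth L d 1 ∈ N1) (hl2 : 2 ≤ L.length) :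
    ∀ v ∈ N1, v ∈ L := by
  intro v hv
  by_contra hvL
  refine hmax L Relation.ReflTransGen.refl ⟨v, Or.inr ?_⟩
  refine path_builder (v :: L) (fun i => if i = 0 then v else nth L d (i - 1))
    (by simp) ?_ (List.nodup_cons.mpr ⟨hvL, hL.2.1⟩) ?_ ?_
  · intro i h
    cases i with
    | zero => simp
    | succ i' =>
      simp only [List.getElem_cons_succ, if_neg (Nat.succ_ne_zero i'),
        Nat.add_sub_cancel]
      exact (nth_eq_getElem d (by simp only [List.length_cons] at h; omega)).symm
  · intro i h
    cases i with
    | zero =>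
      simp only [if_pos rfl, if_neg (Nat.one_ne_zero), Nat.sub_self]
      exact (hN1.1 v hv).symm
    | succ i' =>
      simp only [if_neg (Nat.succ_ne_zero i'), if_neg (Nat.succ_ne_zero (i'+1)),
        Nat.add_sub_cancel]
      exact path_adj d hL i' (by simp only [List.length_cons] at h; omega)
  · intro i h
    cases i with
    | zero =>
      simp only [if_pos rfl, if_neg (Nat.one_ne_zero), if_neg (by omega : 2 ≠ 0),
        Nat.sub_self, show 2 - 1 = 1 from rfl]
      have hvne : v ≠ nth L d 1 := by
        intro he
        exact hvL (he ▸ (by rw [nth_eq_getElem d (by omega)]; exact List.getElem_mem _))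
      have := hN1.2.1 v hv (nth L d 1) hsnd hvne
      rw [cswap c (nth L d 0) v] at this
      exact this
    | succ i' =>
      simp only [if_neg (Nat.succ_ne_zero i'), if_neg (Nat.succ_ne_zero (i'+1)),
        if_neg (Nat.succ_ne_zero (i'+2)), Nat.add_sub_cancel,
        show i' + 1 + 1 - 1 = i' + 1 from rfl, show i' + 2 + 1 - 1 = i' + 2 from rfl]
      exact path_chain d hL i' (by simp only [List.length_cons] at h; omega)

theorem nbhd_subset_right {G : SimpleGraph V} {c : Sym2 V → C} {L : List V} (d : V)
    (hL : IsProperPathList G c L) (hmax : MaximalPathList G c L)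
    {Nl : Finset V} (hNl : IsColorNbhd G c (nth L d (L.length - 1)) Nl)
    (hsnd : nth L d (L.length - 2) ∈ Nl) (hl2 : 2 ≤ L.length) :
    ∀ v ∈ Nl, v ∈ L := by
  intro v hv
  by_contra hvL
  refine hmax L Relation.ReflTransGen.refl ⟨v, Or.inl ?_⟩
  have hllen : (L ++ [v]).length = L.length + 1 := by simp
  refine path_builder (L ++ [v]) (fun i => if i = L.length then v else nth L d i)
    (by simp) ?_ ?_ ?_ ?_
  · intro i h
    rw [hllen] at h
    rcases Nat.lt_or_ge i L.length with hi | hi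
    · rw [List.getElem_append_left hi]
      simp only [if_neg (show ¬ i = L.length by omega)]
      exact (nth_eq_getElem d hi).symm
    · have hie : i = L.length := by omega
      subst hie
      rw [List.getElem_append_right (Nat.le_refl _)]
      simp
  · rw [List.nodup_append, ← List.disjoint_iff_ne]
    exact ⟨hL.2.1, List.nodup_singleton v,
      fun z hz1 hz2 => hvL ((List.mem_singleton.mp hz2) ▸ hz1)⟩
  · intro i h
    rw [hllen] at h
    rcases Nat.lt_or_ge (i+1) L.length with hi | hi
    · simp only [if_neg (show ¬ i = L.length by omega),
        if_neg (show ¬ i + 1 = L.length by omega)]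
      exact path_adj d hL i hi
    · have hie : i + 1 = L.length := by omega
      simp only [if_neg (show ¬ i = L.length by omega), if_pos hie]
      have hadjv := hNl.1 v hv
      rw [show L.length - 1 = i by omega] at hadjv
      exact hadjv
  · intro i h
    rw [hllen] at h
    rcases Nat.lt_or_ge (i+2) L.length with hi | hi
    · simp only [if_neg (show ¬ i = L.length by omega),
        if_neg (show ¬ i + 1 = L.length by omega),
        if_neg (show ¬ i + 2 = L.length by omega)]
      exact path_chain d hL i hi
    · have h2 : i + 2 = L.length := by omega
      simp only [if_neg (show ¬ i = L.length by omega),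
        if_neg (show ¬ i + 1 = L.length by omega), if_pos h2]
      have hvne : nth L d (L.length - 2) ≠ v := by
        intro he
        exact hvL (he ▸ (by rw [nth_eq_getElem d (by omega)]; exact List.getElem_mem _))
      have hcc := hNl.2.1 (nth L d (L.length - 2)) hsnd v hv hvne
      rw [show L.length - 1 = i + 1 by omega, show L.length - 2 = i by omega] at hcc
      rw [cswap c (nth L d i) (nth L d (i+1))]
      exact hcc

theorem shape_drop {G : SimpleGraph V} {c : Sym2 V → C} (L : List V) (d : V)
    (hnd : L.Nodup)
    (hadjL : ∀ i, i + 1 < L.length → G.Adj (nth L d i) (nth L d (i+1)))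
    (hchainL : ∀ i, i + 2 < L.length →
      c s(nth L d i, nth L d (i+1)) ≠ c s(nth L d (i+1), nth L d (i+2)))
    (k : ℕ) (hk : k + 3 ≤ L.length)
    (hadjg : G.Adj (nth L d (L.length - 1)) (nth L d k))
    (hg1 : c s(nth L d (L.length-2), nth L d (L.length-1))
         ≠ c s(nth L d (L.length-1), nth L d k))
    (hg2 : c s(nth L d (L.length-1), nth L d k) ≠ c s(nth L d k, nth L d (k+1))) :
    IsProperCycleList G c (L.drop k) := by
  set l := L.length with hl
  set m := l - k with hm
  have hm3 : 3 ≤ m := by omega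
  have hmlen : (L.drop k).length = m := by simp [hm, hl]
  have hmod1 : (m + 1) % m = 1 := by
    rw [Nat.add_mod_left]; exact Nat.mod_eq_of_lt (by omega)
  set w : ℕ → V := fun i => nth L d (k + i % m) with hwdef
  refine cycle_builder _ w (by omega) ?_ ?_ ?_ ?_ ?_
  · intro i h
    have hi : i < m := by rw [hmlen] at h; exact h
    rw [List.getElem_drop, hwdef]
    simp only
    rw [Nat.mod_eq_of_lt hi, nth_eq_getElem d (by omega)]
  · intro i
    rw [hwdef]; simp only [hmlen, Nat.add_mod_right]
  · exact (List.drop_sublist k L).nodup hnd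
  · intro i hi
    rw [hmlen] at hi
    rw [hwdef]; simp only
    rcases (by omega : i + 1 < m ∨ i + 1 = m) with h1 | h1
    · rw [Nat.mod_eq_of_lt hi, Nat.mod_eq_of_lt h1]
      exact hadjL (k + i) (by omega)
    · rw [Nat.mod_eq_of_lt hi, h1, Nat.mod_self, Nat.add_zero]
      rw [show k + i = l - 1 by omega]
      exact hadjg
  · intro i hi
    rw [hmlen] at hi
    rw [hwdef]; simp only
    rcases (by omega : i + 2 < m ∨ i + 2 = m ∨ i + 1 = m) with h1 | h1 | h1
    · rw [Nat.mod_eq_of_lt hi, Nat.mod_eq_of_lt (by omega : i+1 < m),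
        Nat.mod_eq_of_lt h1]
      exact hchainL (k + i) (by omega)
    · rw [Nat.mod_eq_of_lt hi, Nat.mod_eq_of_lt (by omega : i+1 < m), h1,
        Nat.mod_self, Nat.add_zero]
      rw [show k + i = l - 2 by omega, show k + (i+1) = l - 1 by omega]
      exact hg1
    · rw [Nat.mod_eq_of_lt hi, h1, Nat.mod_self, Nat.add_zero,
        show i + 2 = m + 1 by omega, hmod1]
      rw [show k + i = l - 1 by omega]
      exact hg2

theorem shape_take {G : SimpleGraph V} {c : Sym2 V → C} (L : List V) (d : V)
    (hnd : L.Nodup)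
    (hadjL : ∀ i, i + 1 < L.length → G.Adj (nth L d i) (nth L d (i+1)))
    (hchainL : ∀ i, i + 2 < L.length →
      c s(nth L d i, nth L d (i+1)) ≠ c s(nth L d (i+1), nth L d (i+2)))
    (q : ℕ) (hq2 : 2 ≤ q) (hql : q + 1 ≤ L.length)
    (hadjg : G.Adj (nth L d q) (nth L d 0))
    (hg1 : c s(nth L d (q-1), nth L d q) ≠ c s(nth L d q, nth L d 0))
    (hg2 : c s(nth L d q, nth L d 0) ≠ c s(nth L d 0, nth L d 1)) :
    IsProperCycleList G c (L.take (q+1)) := by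
  set l := L.length with hl
  obtain ⟨m, hm⟩ : ∃ m', m' = q + 1 := ⟨_, rfl⟩
  have hmlen : (L.take (q+1)).length = m := by
    rw [List.length_take]; omega
  have hmod1 : (m + 1) % m = 1 := by
    rw [Nat.add_mod_left]; exact Nat.mod_eq_of_lt (by omega)
  set w : ℕ → V := fun i => nth L d (i % m) with hwdef
  refine cycle_builder _ w (by rw [hmlen]; omega) ?_ ?_ ?_ ?_ ?_
  · intro i h
    have hi : i < m := by rw [hmlen] at h; exact h
    rw [List.getElem_take, hwdef]
    simp only
    rw [Nat.mod_eq_of_lt hi]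
    exact (nth_eq_getElem d (by omega)).symm
  · intro i
    rw [hwdef]; simp only [hmlen, Nat.add_mod_right]
  · exact (List.take_sublist (q+1) L).nodup hnd
  · intro i hi
    rw [hmlen] at hi
    rw [hwdef]; simp only
    rcases (by omega : i + 1 < m ∨ i + 1 = m) with h1 | h1
    · rw [Nat.mod_eq_of_lt hi, Nat.mod_eq_of_lt h1]
      exact hadjL i (by omega)
    · rw [Nat.mod_eq_of_lt hi, h1, Nat.mod_self]
      rw [show i = q by omega]
      exact hadjg
  · intro i hi
    rw [hmlen] at hi
    rw [hwdef]; simp only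
    rcases (by omega : i + 2 < m ∨ i + 2 = m ∨ i + 1 = m) with h1 | h1 | h1
    · rw [Nat.mod_eq_of_lt hi, Nat.mod_eq_of_lt (by omega : i+1 < m),
        Nat.mod_eq_of_lt h1]
      exact hchainL i (by omega)
    · rw [Nat.mod_eq_of_lt hi, Nat.mod_eq_of_lt (by omega : i+1 < m), h1,
        Nat.mod_self]
      rw [show i = q - 1 by omega, show q - 1 + 1 = q by omega]
      exact hg1
    · rw [Nat.mod_eq_of_lt hi, h1, Nat.mod_self,
        show i + 2 = m + 1 by omega, hmod1]
      rw [show i = q by omega]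
      exact hg2

theorem shape_takeplus {G : SimpleGraph V} {c : Sym2 V → C} (L : List V) (d : V)
    (hnd : L.Nodup)
    (hadjL : ∀ i, i + 1 < L.length → G.Adj (nth L d i) (nth L d (i+1)))
    (hchainL : ∀ i, i + 2 < L.length →
      c s(nth L d i, nth L d (i+1)) ≠ c s(nth L d (i+1), nth L d (i+2)))
    (a : ℕ) (ha1 : 1 ≤ a) (hal : a + 3 ≤ L.length)
    (hadjf : G.Adj (nth L d a) (nth L d (L.length - 1)))
    (hadjg : G.Adj (nth L d (L.length - 1)) (nth L d 0))
    (h1 : c s(nth L d (a-1), nth L d a) ≠ c s(nth L d a, nth L d (L.length - 1)))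
    (h2 : c s(nth L d a, nth L d (L.length - 1))
        ≠ c s(nth L d (L.length - 1), nth L d 0))
    (h3 : c s(nth L d (L.length - 1), nth L d 0) ≠ c s(nth L d 0, nth L d 1)) :
    IsProperCycleList G c (L.take (a+1) ++ [nth L d (L.length - 1)]) := by
  set l := L.length with hl
  set m := a + 2 with hm
  have hTlen : (L.take (a+1)).length = a + 1 := by
    simp only [List.length_take]; omega
  have hmlen : (L.take (a+1) ++ [nth L d (l - 1)]).length = m := by
    simp only [List.length_append, hTlen, List.length_singleton] <;> rfl
  have hmod1 : (m + 1) % m = 1 := by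
    rw [Nat.add_mod_left]; exact Nat.mod_eq_of_lt (by omega)
  set w : ℕ → V := fun i => if i % m = a + 1 then nth L d (l-1) else nth L d (i % m)
    with hwdef
  refine cycle_builder _ w (by omega) ?_ ?_ ?_ ?_ ?_
  · intro i h
    have hi : i < m := by rw [hmlen] at h; exact h
    rcases (by omega : i ≤ a ∨ i = a + 1) with h1' | h1'
    · rw [List.getElem_append_left (by omega : i < (L.take (a+1)).length)]
      rw [List.getElem_take, hwdef]; simp only
      rw [Nat.mod_eq_of_lt (by omega : i < m), if_neg (by omega)]
      exact (nth_eq_getElem d (by omega)).symm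
    · subst h1'
      rw [List.getElem_append_right hTlen.le]
      simp only [hTlen, Nat.sub_self, List.getElem_cons_zero]
      rw [hwdef]; simp only
      rw [Nat.mod_eq_of_lt (by omega : a + 1 < m), if_pos rfl]
  · intro i
    rw [hwdef]; simp only [hmlen, Nat.add_mod_right]
  · rw [List.nodup_append, ← List.disjoint_iff_ne]
    refine ⟨(List.take_sublist _ L).nodup hnd, List.nodup_singleton _, ?_⟩
    intro z hz1 hz2
    rw [List.mem_singleton] at hz2
    obtain ⟨j, hj, hje⟩ := List.getElem_of_mem hz1
    rw [hTlen] at hj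
    rw [List.getElem_take] at hje
    subst hz2
    rw [← nth_eq_getElem d (by omega)] at hje
    have := nth_inj d hnd (by omega) (by omega) hje
    omega
  · intro i hi
    rw [hmlen] at hi
    rw [hwdef]; simp only
    rcases (by omega : i + 1 ≤ a ∨ i = a ∨ i = a + 1) with h1' | h1' | h1'
    · rw [Nat.mod_eq_of_lt (by omega : i < m), if_neg (by omega),
        Nat.mod_eq_of_lt (by omega : i + 1 < m), if_neg (by omega)]
      exact hadjL i (by omega)
    · rw [Nat.mod_eq_of_lt (by omega : i < m), if_neg (by omega),
        Nat.mod_eq_of_lt (by omega : i + 1 < m), if_pos (by omega), h1']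
      exact hadjf
    · rw [h1', Nat.mod_eq_of_lt (by omega : a + 1 < m), if_pos rfl,
        show a + 1 + 1 = m by omega, Nat.mod_self, if_neg (by omega)]
      exact hadjg
  · intro i hi
    rw [hmlen] at hi
    rw [hwdef]; simp only
    rcases (by omega : i + 2 ≤ a ∨ i + 1 = a ∨ i = a ∨ i = a + 1)
      with h1' | h1' | h1' | h1'
    · rw [Nat.mod_eq_of_lt (by omega : i < m), if_neg (by omega),
        Nat.mod_eq_of_lt (by omega : i + 1 < m), if_neg (by omega),
        Nat.mod_eq_of_lt (by omega : i + 2 < m), if_neg (by omega)]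
      exact hchainL i (by omega)
    · rw [Nat.mod_eq_of_lt (by omega : i < m), if_neg (by omega),
        Nat.mod_eq_of_lt (by omega : i + 1 < m), if_neg (by omega),
        Nat.mod_eq_of_lt (by omega : i + 2 < m), if_pos (by omega)]
      rw [show i = a - 1 by omega, show a - 1 + 1 = a by omega]
      exact h1
    · rw [Nat.mod_eq_of_lt (by omega : i < m), if_neg (by omega),
        Nat.mod_eq_of_lt (by omega : i + 1 < m), if_pos (by omega),
        show i + 2 = m by omega, Nat.mod_self, if_neg (by omega), h1']
      exact h2
    · rw [h1', Nat.mod_eq_of_lt (by omega : a + 1 < m), if_pos rfl,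
        show a + 1 + 1 = m by omega, Nat.mod_self, if_neg (by omega),
        show a + 1 + 2 = m + 1 by omega, hmod1, if_neg (by omega)]
      exact h3

theorem shape_dropplus {G : SimpleGraph V} {c : Sym2 V → C} (L : List V) (d : V)
    (hnd : L.Nodup)
    (hadjL : ∀ i, i + 1 < L.length → G.Adj (nth L d i) (nth L d (i+1)))
    (hchainL : ∀ i, i + 2 < L.length →
      c s(nth L d i, nth L d (i+1)) ≠ c s(nth L d (i+1), nth L d (i+2)))
    (k : ℕ) (hk2 : 2 ≤ k) (hkl : k + 2 ≤ L.length)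
    (hadjg : G.Adj (nth L d (L.length - 1)) (nth L d 0))
    (hadjf : G.Adj (nth L d 0) (nth L d k))
    (h1 : c s(nth L d (L.length - 2), nth L d (L.length - 1))
        ≠ c s(nth L d (L.length - 1), nth L d 0))
    (h2 : c s(nth L d (L.length - 1), nth L d 0) ≠ c s(nth L d 0, nth L d k))
    (h3 : c s(nth L d 0, nth L d k) ≠ c s(nth L d k, nth L d (k+1))) :
    IsProperCycleList G c (L.drop k ++ [nth L d 0]) := by
  set l := L.length with hl
  set m := l - k + 1 with hm
  have hDlen : (L.drop k).length = m - 1 := by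
    simp only [List.length_drop]; omega
  have hmlen : (L.drop k ++ [nth L d 0]).length = m := by
    simp only [List.length_append, hDlen, List.length_singleton]; omega
  have hm3 : 3 ≤ m := by omega
  have hmod1 : (m + 1) % m = 1 := by
    rw [Nat.add_mod_left]; exact Nat.mod_eq_of_lt (by omega)
  set w : ℕ → V := fun i => if i % m = m - 1 then nth L d 0 else nth L d (k + i % m)
    with hwdef
  refine cycle_builder _ w (by omega) ?_ ?_ ?_ ?_ ?_
  · intro i h
    have hi : i < m := by rw [hmlen] at h; exact h
    rcases (by omega : i < m - 1 ∨ i = m - 1) with h1' | h1'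
    · rw [List.getElem_append_left (by omega : i < (L.drop k).length)]
      rw [List.getElem_drop, hwdef]; simp only
      rw [Nat.mod_eq_of_lt (by omega : i < m), if_neg (by omega)]
      exact (nth_eq_getElem d (by omega)).symm
    · subst h1'
      rw [List.getElem_append_right hDlen.le]
      simp only [hDlen, Nat.sub_self, List.getElem_cons_zero]
      rw [hwdef]; simp only
      rw [Nat.mod_eq_of_lt (by omega : m - 1 < m), if_pos rfl]
  · intro i
    rw [hwdef]; simp only [hmlen, Nat.add_mod_right]
  · rw [List.nodup_append, ← List.disjoint_iff_ne]
    refine ⟨(List.drop_sublist _ L).nodup hnd, List.nodup_singleton _, ?_⟩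
    intro z hz1 hz2
    rw [List.mem_singleton] at hz2
    obtain ⟨j, hj, hje⟩ := List.getElem_of_mem hz1
    rw [hDlen] at hj
    rw [List.getElem_drop] at hje
    subst hz2
    rw [← nth_eq_getElem d (by omega)] at hje
    have := nth_inj d hnd (by omega) (by omega) hje
    omega
  · intro i hi
    rw [hmlen] at hi
    rw [hwdef]; simp only
    rcases (by omega : i + 1 < m - 1 ∨ i + 1 = m - 1 ∨ i = m - 1)
      with h1' | h1' | h1'
    · rw [Nat.mod_eq_of_lt (by omega : i < m), if_neg (by omega),
        Nat.mod_eq_of_lt (by omega : i + 1 < m), if_neg (by omega)]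
      exact hadjL (k + i) (by omega)
    · rw [Nat.mod_eq_of_lt (by omega : i < m), if_neg (by omega),
        Nat.mod_eq_of_lt (by omega : i + 1 < m), if_pos h1']
      rw [show k + i = l - 1 by omega]
      exact hadjg
    · rw [h1', Nat.mod_eq_of_lt (by omega : m - 1 < m), if_pos rfl,
        show m - 1 + 1 = m by omega, Nat.mod_self, if_neg (by omega),
        Nat.add_zero]
      exact hadjf
  · intro i hi
    rw [hmlen] at hi
    rw [hwdef]; simp only
    rcases (by omega : i + 2 < m - 1 ∨ i + 2 = m - 1 ∨ i + 1 = m - 1 ∨ i = m - 1)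
      with h1' | h1' | h1' | h1'
    · rw [Nat.mod_eq_of_lt (by omega : i < m), if_neg (by omega),
        Nat.mod_eq_of_lt (by omega : i + 1 < m), if_neg (by omega),
        Nat.mod_eq_of_lt (by omega : i + 2 < m), if_neg (by omega)]
      exact hchainL (k + i) (by omega)
    · rw [Nat.mod_eq_of_lt (by omega : i < m), if_neg (by omega),
        Nat.mod_eq_of_lt (by omega : i + 1 < m), if_neg (by omega),
        Nat.mod_eq_of_lt (by omega : i + 2 < m), if_pos h1']
      rw [show k + i = l - 2 by omega, show k + (i + 1) = l - 1 by omega]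
      exact h1
    · rw [Nat.mod_eq_of_lt (by omega : i < m), if_neg (by omega),
        Nat.mod_eq_of_lt (by omega : i + 1 < m), if_pos h1',
        show i + 2 = m by omega, Nat.mod_self, if_neg (by omega), Nat.add_zero]
      rw [show k + i = l - 1 by omega]
      exact h2
    · rw [h1', Nat.mod_eq_of_lt (by omega : m - 1 < m), if_pos rfl,
        show m - 1 + 1 = m by omega, Nat.mod_self, if_neg (by omega),
        show m - 1 + 2 = m + 1 by omega, hmod1, if_neg (by omega), Nat.add_zero]
      exact h3

theorem shape_cross {G : SimpleGraph V} {c : Sym2 V → C} (L : List V) (d : V)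
    (hnd : L.Nodup)
    (hadjL : ∀ i, i + 1 < L.length → G.Adj (nth L d i) (nth L d (i+1)))
    (hchainL : ∀ i, i + 2 < L.length →
      c s(nth L d i, nth L d (i+1)) ≠ c s(nth L d (i+1), nth L d (i+2)))
    (a b : ℕ) (ha1 : 1 ≤ a) (hab : a < b) (hbl : b + 2 ≤ L.length)
    (hadjf : G.Adj (nth L d a) (nth L d (L.length - 1)))
    (hadjg : G.Adj (nth L d b) (nth L d 0))
    (h1 : c s(nth L d (a-1), nth L d a) ≠ c s(nth L d a, nth L d (L.length - 1)))
    (h2 : c s(nth L d a, nth L d (L.length - 1))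
        ≠ c s(nth L d (L.length - 1), nth L d (L.length - 2)))
    (h3 : c s(nth L d (b+1), nth L d b) ≠ c s(nth L d b, nth L d 0))
    (h4 : c s(nth L d b, nth L d 0) ≠ c s(nth L d 0, nth L d 1)) :
    IsProperCycleList G c (L.take (a+1) ++ (L.drop b).reverse) := by
  set l := L.length with hl
  set m := a + 1 + (l - b) with hm
  have hTlen : (L.take (a+1)).length = a + 1 := by
    simp only [List.length_take]; omega
  have hDlen : ((L.drop b).reverse).length = l - b := by
    simp only [List.length_reverse, List.length_drop] <;> rfl
  have hmlen : (L.take (a+1) ++ (L.drop b).reverse).length = m := by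
    rw [List.length_append, hTlen, hDlen]
  have hm3 : 3 ≤ m := by omega
  have hmod1 : (m + 1) % m = 1 := by
    rw [Nat.add_mod_left]; exact Nat.mod_eq_of_lt (by omega)
  set w : ℕ → V := fun i =>
      if i % m ≤ a then nth L d (i % m) else nth L d (l - 1 - (i % m - (a+1)))
    with hwdef
  have hwval : ∀ i, a + 1 ≤ i → i < m → w i = nth L d (l - 1 - (i - (a+1))) := by
    intro i hia him
    rw [hwdef]; simp only
    rw [Nat.mod_eq_of_lt him, if_neg (by omega)]
  have hwval2 : ∀ i, i ≤ a → w i = nth L d i := by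
    intro i hia
    rw [hwdef]; simp only
    rw [Nat.mod_eq_of_lt (by omega), if_pos (by omega)]
  refine cycle_builder _ w (by omega) ?_ ?_ ?_ ?_ ?_
  · intro i h
    have hi : i < m := by rw [hmlen] at h; exact h
    rcases (by omega : i ≤ a ∨ a + 1 ≤ i) with h1' | h1'
    · rw [List.getElem_append_left (by omega : i < (L.take (a+1)).length)]
      rw [List.getElem_take, hwval2 i h1']
      exact (nth_eq_getElem d (by omega)).symm
    · rw [List.getElem_append_right (by omega : (L.take (a+1)).length ≤ i)]
      rw [hwval i h1' hi]
      rw [List.getElem_reverse, List.getElem_drop]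
      rw [← nth_eq_getElem d
        (i := b + ((List.drop b L).length - 1 - (i - (List.take (a+1) L).length)))
        (by simp only [List.length_drop]; omega)]
      congr 1
      simp only [List.length_drop, hTlen]
      omega
  · intro i
    rw [hwdef]; simp only [hmlen, Nat.add_mod_right]
  · rw [List.nodup_append, ← List.disjoint_iff_ne]
    refine ⟨(List.take_sublist _ L).nodup hnd,
      List.nodup_reverse.mpr ((List.drop_sublist _ L).nodup hnd), ?_⟩
    intro z hz1 hz2
    rw [List.mem_reverse] at hz2
    obtain ⟨j, hj, hje⟩ := List.getElem_of_mem hz1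
    obtain ⟨j', hj', hje'⟩ := List.getElem_of_mem hz2
    rw [hTlen] at hj
    have hj'2 : j' < l - b := by
      rw [List.length_drop] at hj'; omega
    rw [List.getElem_take] at hje
    rw [List.getElem_drop] at hje'
    rw [← nth_eq_getElem d (by omega)] at hje
    rw [← nth_eq_getElem d (by omega)] at hje'
    have := nth_inj d hnd (by omega) (by omega) (hje.trans hje'.symm)
    omega
  · intro i hi
    rw [hmlen] at hi
    rcases (by omega : i + 1 ≤ a ∨ i = a ∨ (a + 1 ≤ i ∧ i + 1 ≤ m - 1) ∨ i = m - 1)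
      with h1' | h1' | ⟨h1', h2'⟩ | h1'
    · rw [hwval2 i (by omega), hwval2 (i+1) h1']
      exact hadjL i (by omega)
    · rw [hwval2 i (le_of_eq h1'), hwval (i+1) (by omega) (by omega)]
      rw [show l - 1 - (i + 1 - (a+1)) = l - 1 by omega, h1']
      exact hadjf
    · rw [hwval i h1' (by omega), hwval (i+1) (by omega) (by omega)]
      have hch := hadjL (l - 1 - (i + 1 - (a+1))) (by omega)
      rw [show l - 1 - (i + 1 - (a+1)) + 1 = l - 1 - (i - (a+1)) by omega] at hch
      exact hch.symm
    · rw [hwval i (by omega) (by omega), show i + 1 = m by omega]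
      have hwm' : w m = w 0 := by
        rw [hwdef]; simp only [Nat.mod_self, Nat.zero_mod] <;> rfl
      rw [hwm', hwval2 0 (by omega),
        show l - 1 - (i - (a+1)) = b by omega]
      exact hadjg
  · intro i hi
    rw [hmlen] at hi
    have hwm : w m = nth L d 0 := by
      rw [hwdef]; simp only [Nat.mod_self]
      rw [if_pos (by omega)]
    have hwm1 : w (m+1) = nth L d 1 := by
      rw [hwdef]; simp only [hmod1]
      rw [if_pos (by omega)]
    rcases (by omega : i + 2 ≤ a ∨ i + 1 = a ∨ i = a ∨
        (a + 1 ≤ i ∧ i + 2 ≤ m - 1) ∨ i + 2 = m ∨ i + 1 = m)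
      with h1' | h1' | h1' | ⟨h1', h2'⟩ | h1' | h1'
    · rw [hwval2 i (by omega), hwval2 (i+1) (by omega), hwval2 (i+2) h1']
      exact hchainL i (by omega)
    · rw [hwval2 i (by omega), hwval2 (i+1) (by omega),
        hwval (i+2) (by omega) (by omega)]
      rw [show l - 1 - (i + 2 - (a+1)) = l - 1 by omega,
        show i = a - 1 by omega, show a - 1 + 1 = a by omega]
      exact h1
    · rw [hwval2 i (le_of_eq h1'), hwval (i+1) (by omega) (by omega),
        hwval (i+2) (by omega) (by omega)]
      rw [show l - 1 - (i + 1 - (a+1)) = l - 1 by omega,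
        show l - 1 - (i + 2 - (a+1)) = l - 2 by omega, h1']
      exact h2
    · rw [hwval i h1' (by omega), hwval (i+1) (by omega) (by omega),
        hwval (i+2) (by omega) (by omega)]
      have hch := hchainL (l - 1 - (i + 2 - (a+1))) (by omega)
      rw [show l - 1 - (i + 2 - (a+1)) + 1 = l - 1 - (i + 1 - (a+1)) by omega,
        show l - 1 - (i + 2 - (a+1)) + 2 = l - 1 - (i - (a+1)) by omega] at hch
      exact col_symm hch
    · rw [hwval i (by omega) (by omega), hwval (i+1) (by omega) (by omega),
        show i + 2 = m by omega, hwm]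
      rw [show l - 1 - (i - (a+1)) = b + 1 by omega,
        show l - 1 - (i + 1 - (a+1)) = b by omega]
      exact h3
    · rw [hwval i (by omega) (by omega), show i + 1 = m by omega, hwm,
        show i + 2 = m + 1 by omega, hwm1]
      rw [show l - 1 - (i - (a+1)) = b by omega]
      exact h4


end CrossingAux

/-- If a maximal properly coloured path `L` (with endpoints `x` and `y`) in a graph of
minimum colour degree at least `2` has a crossing with respect to some choice of colour
neighbourhoods of its endpoints, then the induced subgraph on `V(L)` contains a
properly coloured cycle. -/
theorem crossing_gives_cycle {V C : Type*} [Fintype V]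
    (G : SimpleGraph V) (c : Sym2 V → C) (h2 : 2 ≤ minColorDegree G c)
    (L : List V) (hL : IsProperPathList G c L) (hmax : MaximalPathList G c L)
    (x y : V) (hx : L.head? = some x) (hy : L.getLast? = some y)
    (N1 Nl : Finset V) (hN1 : IsColorNbhd G c x N1) (hNl : IsColorNbhd G c y Nl)
    (hsnd : ∀ z, L[1]? = some z → z ∈ N1)
    (hsnd' : ∀ z, L.reverse[1]? = some z → z ∈ Nl)
    (hcross : ∃ i j : Fin L.length, i < j ∧ L.get i ∈ Nl ∧ L.get j ∈ N1) :
    ∃ M : List V, IsProperCycleList G c M ∧ ∀ z ∈ M, z ∈ L := by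
  classical
  obtain ⟨iF, jF, hij, hiNl, hjN1⟩ := hcross
  have hLne : L ≠ [] := hL.1
  have d : V := L.head hLne
  have hpq : (iF : ℕ) < (jF : ℕ) := hij
  have hq : (jF : ℕ) < L.length := jF.isLt
  have hl2 : 2 ≤ L.length := by omega
  have hpNl : nth L d (iF : ℕ) ∈ Nl := by
    have h' := hiNl
    rw [List.get_eq_getElem] at h'
    rw [nth_eq_getElem d (by omega)]
    exact h'
  have hqN1 : nth L d (jF : ℕ) ∈ N1 := by
    have h' := hjN1
    rw [List.get_eq_getElem] at h'
    rw [nth_eq_getElem d (by omega)]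
    exact h'
  have hx0 : nth L d 0 = x := by
    have h0 : L[0]? = some x := by rw [← List.head?_eq_getElem?]; exact hx
    rw [List.getElem?_eq_getElem (by omega)] at h0
    rw [nth_eq_getElem d (by omega)]
    exact Option.some.inj h0
  subst hx0
  have hyl : nth L d (L.length - 1) = y := by
    have h0 : L[L.length-1]? = some y := by rw [← List.getLast?_eq_getElem?]; exact hy
    rw [List.getElem?_eq_getElem (by omega)] at h0
    rw [nth_eq_getElem d (by omega)]
    exact Option.some.inj h0
  subst hyl
  have h1N1 : nth L d 1 ∈ N1 := by
    have h' := hsnd (L[1]'(by omega)) (List.getElem?_eq_getElem (by omega))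
    rw [nth_eq_getElem d (by omega)]
    exact h'
  have hl2Nl : nth L d (L.length - 2) ∈ Nl := by
    have hrl : 1 < L.reverse.length := by rw [List.length_reverse]; omega
    have h' := hsnd' (L.reverse[1]'hrl) (List.getElem?_eq_getElem hrl)
    rw [List.getElem_reverse] at h'
    rw [← nth_eq_getElem d (by omega)] at h'
    rw [show L.length - 1 - 1 = L.length - 2 by omega] at h'
    exact h'
  have hcard1 : 2 ≤ N1.card := by
    have hmin1 : minColorDegree G c ≤ colorDegree G c (nth L d 0) :=
      Nat.sInf_le ⟨_, rfl⟩
    rw [hN1.2.2]; omega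
  have hcardl : 2 ≤ Nl.card := by
    have hminl : minColorDegree G c ≤ colorDegree G c (nth L d (L.length-1)) :=
      Nat.sInf_le ⟨_, rfl⟩
    rw [hNl.2.2]; omega
  have hnd := hL.2.1
  have hadjL := path_adj d hL
  have hchainL := path_chain d hL
  have hmem1 : ∀ v ∈ N1, v ∈ L := nbhd_subset_left d hL hmax hN1 h1N1 hl2
  have hmeml : ∀ v ∈ Nl, v ∈ L := nbhd_subset_right d hL hmax hNl hl2Nl hl2
  have posOf : ∀ v ∈ L, ∃ k, k < L.length ∧ nth L d k = v := by
    intro v hvmem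
    obtain ⟨k, hk, he⟩ := List.getElem_of_mem hvmem
    exact ⟨k, by omega, by rw [nth_eq_getElem d hk]; exact he⟩
  have hl3 : 3 ≤ L.length := by
    by_contra hcon
    obtain ⟨w0, hw0, hwne⟩ := Finset.exists_mem_ne (show 1 < N1.card by omega) (nth L d 1)
    obtain ⟨k, hk, hke⟩ := posOf w0 (hmem1 w0 hw0)
    have hne0 : k ≠ 0 := by
      intro h0
      exact (hN1.1 w0 hw0).ne (by rw [← hke, h0])
    have hk1 : k = 1 := by omega
    exact hwne (by rw [← hke, hk1])
  have dN1 : ∀ i j : ℕ, i < L.length → j < L.length → nth L d i ∈ N1 → nth L d j ∈ N1 → i ≠ j →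
      c s(nth L d 0, nth L d i) ≠ c s(nth L d 0, nth L d j) := by
    intro i j hi hj m1 m2 hne
    exact hN1.2.1 _ m1 _ m2 (fun he => hne (nth_inj d hnd (by omega) (by omega) he))
  have dNl : ∀ i j : ℕ, i < L.length → j < L.length → nth L d i ∈ Nl → nth L d j ∈ Nl → i ≠ j →
      c s(nth L d (L.length-1), nth L d i) ≠ c s(nth L d (L.length-1), nth L d j) := by
    intro i j hi hj m1 m2 hne
    exact hNl.2.1 _ m1 _ m2 (fun he => hne (nth_inj d hnd (by omega) (by omega) he))
  rcases Nat.eq_zero_or_pos (iF : ℕ) with hp0 | hp1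
  · -- Case II : the first endpoint lies in Nl
    rw [hp0] at hpNl
    by_cases hc0 : c s(nth L d (L.length-1), nth L d 0) = c s(nth L d 0, nth L d 1)
    · obtain ⟨w0, hw0, hwne⟩ := Finset.exists_mem_ne (show 1 < N1.card by omega) (nth L d 1)
      obtain ⟨q', hq'l, hq'e⟩ := posOf w0 (hmem1 w0 hw0)
      subst hq'e
      have hq'0 : q' ≠ 0 := fun he0 => (hN1.1 _ hw0).ne (by rw [he0])
      have hq'1 : q' ≠ 1 := fun he1 => hwne (by rw [he1])
      have hq'l1 : q' ≠ L.length - 1 := by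
        intro he
        apply dN1 q' 1 (by omega) (by omega) hw0 h1N1 (by omega)
        rw [he, ← hc0, cswap c (nth L d (L.length-1)) (nth L d 0)]
      by_cases hcq : c s(nth L d q', nth L d (q'+1)) = c s(nth L d q', nth L d 0)
      · refine ⟨L.take (q'+1),
          shape_take L d hnd hadjL hchainL q' (by omega) (by omega)
            ((hN1.1 _ hw0).symm) ?_ ?_, fun z hz => List.take_subset _ _ hz⟩
        · have hch := hchainL (q'-1) (by omega)
          rw [show q'-1+1 = q' by omega, show q'-1+2 = q'+1 by omega] at hch
          rw [← hcq]
          exact hch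
        · have hdd := dN1 q' 1 (by omega) (by omega) hw0 h1N1 (by omega)
          rw [cswap c (nth L d q') (nth L d 0)]
          exact hdd
      · refine ⟨L.drop q' ++ [nth L d 0],
          shape_dropplus L d hnd hadjL hchainL q' (by omega) (by omega)
            (hNl.1 _ hpNl) (hN1.1 _ hw0) ?_ ?_ ?_, ?_⟩
        · have hdd := dNl 0 (L.length-2) (by omega) (by omega) hpNl hl2Nl (by omega)
          rw [cswap c (nth L d (L.length-2)) (nth L d (L.length-1))]
          exact hdd.symm
        · rw [hc0]
          exact dN1 1 q' (by omega) (by omega) h1N1 hw0 (by omega)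
        · rw [cswap c (nth L d 0) (nth L d q')]
          exact fun he => hcq he.symm
        · intro z hz
          rcases List.mem_append.mp hz with hz1 | hz2
          · exact List.drop_subset _ _ hz1
          · rw [List.mem_singleton.mp hz2, nth_eq_getElem d (by omega)]
            exact List.getElem_mem _
    · refine ⟨L.drop 0,
        shape_drop L d hnd hadjL hchainL 0 (by omega)
          (hNl.1 _ hpNl) ?_ ?_, fun z hz => List.drop_subset _ _ hz⟩
      · have hdd := dNl 0 (L.length-2) (by omega) (by omega) hpNl hl2Nl (by omega)
        rw [cswap c (nth L d (L.length-2)) (nth L d (L.length-1))]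
        exact hdd.symm
      · exact hc0
  · rcases (by omega : (jF : ℕ) = L.length - 1 ∨ (jF : ℕ) + 2 ≤ L.length) with hql1 | hql2
    · -- Case III : the last endpoint lies in N1
      rw [hql1] at hqN1
      by_cases hc0' : c s(nth L d (L.length-1), nth L d 0) = c s(nth L d (L.length-2), nth L d (L.length-1))
      · obtain ⟨w0, hw0, hwne⟩ :=
          Finset.exists_mem_ne (show 1 < Nl.card by omega) (nth L d (L.length-2))
        obtain ⟨p', hp'l, hp'e⟩ := posOf w0 (hmeml w0 hw0)
        subst hp'e
        have hp'l1 : p' ≠ L.length - 1 := fun he0 => (hNl.1 _ hw0).ne (by rw [he0])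
        have hp'l2 : p' ≠ L.length - 2 := fun he1 => hwne (by rw [he1])
        have hp'0 : p' ≠ 0 := by
          intro he
          apply dNl p' (L.length-2) (by omega) (by omega) hw0 hl2Nl (by omega)
          rw [he, hc0', cswap c (nth L d (L.length-2)) (nth L d (L.length-1))]
        by_cases hcp : c s(nth L d (p'-1), nth L d p') = c s(nth L d p', nth L d (L.length-1))
        · refine ⟨L.drop p',
            shape_drop L d hnd hadjL hchainL p' (by omega)
              (hNl.1 _ hw0) ?_ ?_, fun z hz => List.drop_subset _ _ hz⟩
          · have hdd := dNl p' (L.length-2) (by omega) (by omega) hw0 hl2Nl (by omega)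
            rw [cswap c (nth L d (L.length-2)) (nth L d (L.length-1))]
            exact hdd.symm
          · have hch := hchainL (p'-1) (by omega)
            rw [show p'-1+1 = p' by omega, show p'-1+2 = p'+1 by omega] at hch
            rw [cswap c (nth L d (L.length-1)) (nth L d p'), ← hcp]
            exact hch
        · refine ⟨L.take (p'+1) ++ [nth L d (L.length-1)],
            shape_takeplus L d hnd hadjL hchainL p' (by omega) (by omega)
              ((hNl.1 _ hw0).symm) ((hN1.1 _ hqN1).symm) hcp ?_ ?_, ?_⟩
          · rw [hc0']
            have hdd := dNl p' (L.length-2) (by omega) (by omega) hw0 hl2Nl (by omega)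
            rw [cswap c (nth L d p') (nth L d (L.length-1)),
              cswap c (nth L d (L.length-2)) (nth L d (L.length-1))]
            exact hdd
          · have hdd := dN1 (L.length-1) 1 (by omega) (by omega) hqN1 h1N1 (by omega)
            rw [cswap c (nth L d (L.length-1)) (nth L d 0)]
            exact hdd
          · intro z hz
            rcases List.mem_append.mp hz with hz1 | hz2
            · exact List.take_subset _ _ hz1
            · rw [List.mem_singleton.mp hz2, nth_eq_getElem d (by omega)]
              exact List.getElem_mem _
      · refine ⟨L.drop 0,
          shape_drop L d hnd hadjL hchainL 0 (by omega)
            ((hN1.1 _ hqN1).symm) ?_ ?_, fun z hz => List.drop_subset _ _ hz⟩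
        · exact fun he => hc0' he.symm
        · have hdd := dN1 (L.length-1) 1 (by omega) (by omega) hqN1 h1N1 (by omega)
          rw [cswap c (nth L d (L.length-1)) (nth L d 0)]
          exact hdd
    · -- Case I : a genuine interior crossing
      by_cases hcp : c s(nth L d ((iF:ℕ)-1), nth L d (iF:ℕ))
          = c s(nth L d (iF:ℕ), nth L d (L.length-1))
      · refine ⟨L.drop (iF:ℕ),
          shape_drop L d hnd hadjL hchainL (iF:ℕ) (by omega)
            (hNl.1 _ hpNl) ?_ ?_, fun z hz => List.drop_subset _ _ hz⟩
        · have hdd := dNl (iF:ℕ) (L.length-2) (by omega) (by omega) hpNl hl2Nl (by omega)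
          rw [cswap c (nth L d (L.length-2)) (nth L d (L.length-1))]
          exact hdd.symm
        · have hch := hchainL ((iF:ℕ)-1) (by omega)
          rw [show (iF:ℕ)-1+1 = (iF:ℕ) by omega,
            show (iF:ℕ)-1+2 = (iF:ℕ)+1 by omega] at hch
          rw [cswap c (nth L d (L.length-1)) (nth L d (iF:ℕ)), ← hcp]
          exact hch
      · by_cases hcq : c s(nth L d (jF:ℕ), nth L d ((jF:ℕ)+1))
            = c s(nth L d (jF:ℕ), nth L d 0)
        · refine ⟨L.take ((jF:ℕ)+1),
            shape_take L d hnd hadjL hchainL (jF:ℕ) (by omega) (by omega)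
              ((hN1.1 _ hqN1).symm) ?_ ?_, fun z hz => List.take_subset _ _ hz⟩
          · have hch := hchainL ((jF:ℕ)-1) (by omega)
            rw [show (jF:ℕ)-1+1 = (jF:ℕ) by omega,
              show (jF:ℕ)-1+2 = (jF:ℕ)+1 by omega] at hch
            rw [← hcq]
            exact hch
          · have hdd := dN1 (jF:ℕ) 1 (by omega) (by omega) hqN1 h1N1 (by omega)
            rw [cswap c (nth L d (jF:ℕ)) (nth L d 0)]
            exact hdd
        · refine ⟨L.take ((iF:ℕ)+1) ++ (L.drop (jF:ℕ)).reverse,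
            shape_cross L d hnd hadjL hchainL (iF:ℕ) (jF:ℕ) (by omega) (by omega)
              (by omega) ((hNl.1 _ hpNl).symm) ((hN1.1 _ hqN1).symm) hcp ?_ ?_ ?_, ?_⟩
          · have hdd := dNl (iF:ℕ) (L.length-2) (by omega) (by omega) hpNl hl2Nl (by omega)
            rw [cswap c (nth L d (iF:ℕ)) (nth L d (L.length-1))]
            exact hdd
          · rw [cswap c (nth L d ((jF:ℕ)+1)) (nth L d (jF:ℕ))]
            exact hcq
          · have hdd := dN1 (jF:ℕ) 1 (by omega) (by omega) hqN1 h1N1 (by omega)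
            rw [cswap c (nth L d (jF:ℕ)) (nth L d 0)]
            exact hdd
          · intro z hz
            rcases List.mem_append.mp hz with hz1 | hz2
            · exact List.take_subset _ _ hz1
            · exact List.drop_subset _ _ (List.mem_reverse.mp hz2)
end
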